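/- arXiv:0801.4655 — 5 statements merged into one kernel-verified Lean document; each statement's English description precedes it below -/
import Mathlib

section
/- Let $U^{(1)}$ and $U^{(2)}$ be two adapted càdlàg processes satisfying $U^{(i)}_t = X_t - \delta \int_0^t \mathbf{1}_{\{U^{(i)}_s > b\}}\,ds$ for the same driving process $X$ and constants $\delta > 0$, $b \in \mathbb{R}$. Then $U^{(1)}_t = U^{(2)}_t$ for all $t \geq 0$. (Pathwise uniqueness for the refraction SDE.) -/
open MeasureTheory Set

/-- Pathwise uniqueness for the refraction SDE: two solutions of
`U t = X t - δ ∫_0^t 1_{U s > b} ds` driven by the same path `X` coincide. -/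
theorem pathwise_uniqueness_refraction
    (X U1 U2 : ℝ → ℝ) (δ b : ℝ) (hδ : 0 < δ)
    (hX : Measurable X) (hU1 : Measurable U1) (hU2 : Measurable U2)
    (h1 : ∀ t ≥ (0:ℝ), U1 t = X t - δ * ∫ s in (0:ℝ)..t,
      (Set.Ioi b).indicator (fun _ => (1:ℝ)) (U1 s))
    (h2 : ∀ t ≥ (0:ℝ), U2 t = X t - δ * ∫ s in (0:ℝ)..t,
      (Set.Ioi b).indicator (fun _ => (1:ℝ)) (U2 s)) :
    ∀ t ≥ (0:ℝ), U1 t = U2 t := by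
  set f : ℝ → ℝ := fun x => (Set.Ioi b).indicator (fun _ => (1:ℝ)) x with hfdef
  have hfmeas : Measurable f := measurable_const.indicator measurableSet_Ioi
  have hf01 : ∀ x, 0 ≤ f x ∧ f x ≤ 1 := by
    intro x
    simp only [hfdef, Set.indicator_apply]
    split <;> norm_num
  have hfmono : Monotone f := by
    intro x y hxy
    simp only [hfdef, Set.indicator_apply, Set.mem_Ioi]
    by_cases hx : b < x
    · have hy : b < y := lt_of_lt_of_le hx hxy
      simp [hx, hy]
    · simp only [hx, if_false]
      split <;> norm_num
  set g : ℝ → ℝ := fun s => f (U1 s) - f (U2 s) with hgdef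
  have hgmeas : Measurable g := (hfmeas.comp hU1).sub (hfmeas.comp hU2)
  have hgbd : ∀ s, |g s| ≤ 1 := by
    intro s
    have h1' := hf01 (U1 s); have h2' := hf01 (U2 s)
    rw [abs_le]; constructor <;> simp only [hgdef] <;> linarith [h1'.1, h1'.2, h2'.1, h2'.2]
  -- integrability of g on intervals
  have hgint : ∀ a c : ℝ, IntegrableOn g (Set.Ioc a c) := by
    intro a c
    refine Integrable.mono' (integrable_const 1) hgmeas.aestronglyMeasurable.restrict ?_
    exact ae_of_all _ fun s => by simpa using hgbd s
  have hgii : ∀ a c : ℝ, IntervalIntegrable g volume a c := by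
    intro a c
    rw [intervalIntegrable_iff]
    exact hgint (a ⊓ c) (a ⊔ c)
  have hint1 : ∀ a c : ℝ, IntegrableOn (fun s => f (U1 s)) (Set.Ioc a c) := by
    intro a c
    refine Integrable.mono' (integrable_const 1)
      ((hfmeas.comp hU1).aestronglyMeasurable.restrict) (ae_of_all _ fun s => ?_)
    have := hf01 (U1 s)
    rw [Real.norm_eq_abs, abs_le]
    constructor <;> linarith [this.1, this.2]
  have hint2 : ∀ a c : ℝ, IntegrableOn (fun s => f (U2 s)) (Set.Ioc a c) := by
    intro a c
    refine Integrable.mono' (integrable_const 1)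
      ((hfmeas.comp hU2).aestronglyMeasurable.restrict) (ae_of_all _ fun s => ?_)
    have := hf01 (U2 s)
    rw [Real.norm_eq_abs, abs_le]
    constructor <;> linarith [this.1, this.2]
  have hii1 : ∀ a c : ℝ, IntervalIntegrable (fun s => f (U1 s)) volume a c := by
    intro a c
    rw [intervalIntegrable_iff]
    exact hint1 (a ⊓ c) (a ⊔ c)
  have hii2 : ∀ a c : ℝ, IntervalIntegrable (fun s => f (U2 s)) volume a c := by
    intro a c
    rw [intervalIntegrable_iff]
    exact hint2 (a ⊓ c) (a ⊔ c)
  set F : ℝ → ℝ := fun s => ∫ u in (0:ℝ)..s, g u with hFdef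
  have hFcont : Continuous F := intervalIntegral.continuous_primitive hgii 0
  have hFset : ∀ s : ℝ, 0 ≤ s → F s = ∫ u in Set.Ioc 0 s, g u := fun s hs =>
    intervalIntegral.integral_of_le hs
  -- relation between the difference of solutions and F
  have hΔ : ∀ s : ℝ, 0 ≤ s → U1 s - U2 s = -(δ * F s) := by
    intro s hs
    have hsub : (∫ u in (0:ℝ)..s, f (U1 u)) - (∫ u in (0:ℝ)..s, f (U2 u)) = F s := by
      rw [hFdef]
      exact (intervalIntegral.integral_sub (hii1 0 s) (hii2 0 s)).symm
    rw [h1 s hs, h2 s hs]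
    simp only [hfdef] at hsub ⊢
    linear_combination (-δ) * hsub
  -- pointwise sign condition
  have hsign : ∀ s : ℝ, 0 ≤ s → g s * F s ≤ 0 := by
    intro s hs
    have hmul : 0 ≤ g s * (U1 s - U2 s) := by
      rcases le_total (U1 s) (U2 s) with h | h
      · have hg0 : g s ≤ 0 := sub_nonpos.mpr (hfmono h)
        have hd0 : U1 s - U2 s ≤ 0 := sub_nonpos.mpr h
        nlinarith
      · exact mul_nonneg (sub_nonneg.mpr (hfmono h)) (sub_nonneg.mpr h)
    rw [hΔ s hs] at hmul
    by_contra hcon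
    push_neg at hcon
    nlinarith
  intro t ht
  set μ := volume.restrict (Set.Ioc (0:ℝ) t) with hμdef
  haveI : IsFiniteMeasure μ :=
    ⟨by rw [hμdef, Measure.restrict_apply_univ]; exact measure_Ioc_lt_top⟩
  set K : ℝ × ℝ → ℝ := fun p => if p.2 ≤ p.1 then g p.1 * g p.2 else 0 with hKdef
  have hKmeas : Measurable K :=
    Measurable.ite (measurableSet_le measurable_snd measurable_fst)
      ((hgmeas.comp measurable_fst).mul (hgmeas.comp measurable_snd)) measurable_const
  have hKbd : ∀ p, ‖K p‖ ≤ 1 := by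
    intro p
    simp only [hKdef]
    split
    · rw [Real.norm_eq_abs, abs_mul]
      exact mul_le_one₀ (hgbd _) (abs_nonneg _) (hgbd _)
    · simp
  have hKint : Integrable K (μ.prod μ) :=
    Integrable.mono' (integrable_const 1) hKmeas.aestronglyMeasurable
      (ae_of_all _ fun p => by simpa using hKbd p)
  -- integrability facts over μ
  have hgμ : Integrable g μ := hgint 0 t
  have hFμ : Integrable F μ := (hFcont.integrableOn_Ioc)
  have hgFμ : Integrable (fun u => g u * F u) μ :=
    hFμ.bdd_mul (c := 1) hgmeas.aestronglyMeasurable (ae_of_all _ fun u => by simpa using hgbd u)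
  -- first computation of the double integral
  have hI1 : ∫ p, K p ∂(μ.prod μ) = ∫ s, g s * F s ∂μ := by
    rw [MeasureTheory.integral_prod _ hKint]
    refine integral_congr_ae ?_
    filter_upwards [ae_restrict_mem measurableSet_Ioc] with s hs
    have heq : ∀ u, K (s, u) = (Set.Iic s).indicator (fun u => g s * g u) u := by
      intro u
      by_cases h : u ≤ s <;> simp [hKdef, Set.indicator, h]
    calc ∫ u, K (s, u) ∂μ = ∫ u, (Set.Iic s).indicator (fun u => g s * g u) u ∂μ := by
          exact integral_congr_ae (ae_of_all _ heq)
      _ = ∫ u in Set.Iic s, g s * g u ∂μ := MeasureTheory.integral_indicator measurableSet_Iic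
      _ = ∫ u in Set.Iic s ∩ Set.Ioc 0 t, g s * g u := by
          rw [hμdef, Measure.restrict_restrict measurableSet_Iic]
      _ = ∫ u in Set.Ioc 0 s, g s * g u := by
          have hseteq : Set.Iic s ∩ Set.Ioc 0 t = Set.Ioc 0 s := by
            ext x
            simp only [Set.mem_inter_iff, Set.mem_Iic, Set.mem_Ioc]
            constructor
            · rintro ⟨h1', h2', _⟩; exact ⟨h2', h1'⟩
            · rintro ⟨h1', h2'⟩; exact ⟨h2', h1', h2'.trans hs.2⟩
          rw [hseteq]
      _ = g s * ∫ u in Set.Ioc 0 s, g u := integral_const_mul _ _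
      _ = g s * F s := by rw [hFset s hs.1.le]
  -- second computation of the double integral (Fubini)
  have hI2 : ∫ p, K p ∂(μ.prod μ) = F t * F t - ∫ s, g s * F s ∂μ := by
    rw [MeasureTheory.integral_prod_symm _ hKint]
    have hinner : ∀ᵐ u ∂μ, (∫ s, K (s, u) ∂μ) = g u * (F t - F u) := by
      filter_upwards [ae_restrict_mem measurableSet_Ioc] with u hu
      have heq : ∀ s, K (s, u) = (Set.Ici u).indicator (fun s => g s * g u) s := by
        intro s
        by_cases h : u ≤ s <;> simp [hKdef, Set.indicator, h]
      have hIocint : (∫ s in Set.Ioc u t, g s) = F t - F u := by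
        have hadd := intervalIntegral.integral_add_adjacent_intervals (hgii 0 u) (hgii u t)
        have hFt' : F t = ∫ x in (0:ℝ)..t, g x := rfl
        have hFu' : F u = ∫ x in (0:ℝ)..u, g x := rfl
        rw [hFt', hFu', ← hadd, ← intervalIntegral.integral_of_le hu.2]
        ring
      calc ∫ s, K (s, u) ∂μ = ∫ s, (Set.Ici u).indicator (fun s => g s * g u) s ∂μ :=
            integral_congr_ae (ae_of_all _ heq)
        _ = ∫ s in Set.Ici u, g s * g u ∂μ := MeasureTheory.integral_indicator measurableSet_Ici
        _ = ∫ s in Set.Ici u ∩ Set.Ioc 0 t, g s * g u := by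
            rw [hμdef, Measure.restrict_restrict measurableSet_Ici]
        _ = ∫ s in Set.Icc u t, g s * g u := by
            have hseteq : Set.Ici u ∩ Set.Ioc 0 t = Set.Icc u t := by
              ext x
              simp only [Set.mem_inter_iff, Set.mem_Ici, Set.mem_Ioc, Set.mem_Icc]
              constructor
              · rintro ⟨h1', _, h3'⟩; exact ⟨h1', h3'⟩
              · rintro ⟨h1', h2'⟩; exact ⟨h1', lt_of_lt_of_le hu.1 h1', h2'⟩
            rw [hseteq]
        _ = ∫ s in Set.Ioc u t, g s * g u := MeasureTheory.integral_Icc_eq_integral_Ioc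
        _ = (∫ s in Set.Ioc u t, g s) * g u := integral_mul_const _ _
        _ = g u * (F t - F u) := by rw [hIocint]; ring
    rw [integral_congr_ae hinner]
    have hsplit : ∫ u, g u * (F t - F u) ∂μ
        = (∫ u, g u * F t ∂μ) - ∫ u, g u * F u ∂μ := by
      rw [← integral_sub (hgμ.mul_const (F t)) hgFμ]
      congr 1
      ext u
      ring
    rw [hsplit]
    have hmr : (∫ u, g u * F t ∂μ) = (∫ u, g u ∂μ) * F t := integral_mul_const _ _
    rw [hmr, hμdef, ← hFset t ht]
  -- conclude
  have hint_np : ∫ s, g s * F s ∂μ ≤ 0 := by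
    refine integral_nonpos_of_ae ?_
    filter_upwards [ae_restrict_mem measurableSet_Ioc] with s hs
    exact hsign s hs.1.le
  have hsq : F t * F t ≤ 0 := by
    have := hI1.symm.trans hI2
    linarith
  have hFt : F t = 0 := by
    have := mul_self_nonneg (F t)
    have h0 : F t * F t = 0 := le_antisymm hsq this
    exact mul_self_eq_zero.mp h0
  have := hΔ t ht
  rw [hFt] at this
  linarith
end

section
/- Suppose $X^{(n)}, X^{(m)} : [0,t] \to \mathbb{R}$ are càdlàg paths with $\sup_{s \in [0,t]} |X^{(n)}_s - X^{(m)}_s| < \eta$, and $U^{(n)}, U^{(m)}$ are solutions of the respective refraction equations $U_s = X_s - \delta\int_0^s \mathbf{1}_{\{U_v > b\}}\,dv$ driven by $X^{(n)}$ and $X^{(m)}$ with the same $\delta > 0$ and level $b$. Then $\sup_{s \in [0,t]} |U^{(n)}_s - U^{(m)}_s| < 2\eta$; in particular the drift term $A^{(n,m)}_s := (U^{(n)}_s - U^{(m)}_s) - (X^{(n)}_s - X^{(m)}_s)$ satisfies $\sup_{s\in[0,t]}|A^{(n,m)}_s| \leq \eta$. -/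
open MeasureTheory Set Filter Topology

/-- A right-continuous function on `ℝ` is measurable. -/
lemma measurable_of_rightCont (f : ℝ → ℝ)
    (hf : ∀ s, ContinuousWithinAt f (Set.Ici s) s) : Measurable f := by
  have hmeas : ∀ n : ℕ, Measurable fun x : ℝ => f ((⌈x * 2 ^ n⌉ : ℤ) / 2 ^ n) := by
    intro n
    have : (fun x : ℝ => f ((⌈x * 2 ^ n⌉ : ℤ) / 2 ^ n))
        = (fun k : ℤ => f ((k : ℝ) / 2 ^ n)) ∘ (fun x : ℝ => ⌈x * 2 ^ n⌉) := rfl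
    rw [this]
    exact measurable_from_top.comp (Int.measurable_ceil.comp (measurable_id.mul_const _))
  apply measurable_of_tendsto_metrizable hmeas
  rw [tendsto_pi_nhds]
  intro x
  have h2 : ∀ n : ℕ, (0:ℝ) < 2 ^ n := fun n => by positivity
  set c : ℕ → ℝ := fun n => (⌈x * 2 ^ n⌉ : ℤ) / 2 ^ n with hc
  have hge : ∀ n, x ≤ c n := by
    intro n
    rw [hc, le_div_iff₀ (h2 n)]
    exact Int.le_ceil _
  have hle : ∀ n, c n ≤ x + (1/2) ^ n := by
    intro n
    rw [hc, div_le_iff₀ (h2 n)]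
    have := (Int.ceil_lt_add_one (x * 2 ^ n)).le
    have : (⌈x * 2 ^ n⌉ : ℝ) ≤ x * 2 ^ n + 1 := this
    calc (⌈x * 2 ^ n⌉ : ℝ) ≤ x * 2 ^ n + 1 := this
      _ = (x + (1/2) ^ n) * 2 ^ n := by
          rw [add_mul, ← mul_pow]; norm_num
  have hcx : Tendsto c atTop (𝓝 x) := by
    have hup : Tendsto (fun n : ℕ => x + (1/2 : ℝ) ^ n) atTop (𝓝 x) := by
      have : Tendsto (fun n : ℕ => (1/2 : ℝ) ^ n) atTop (𝓝 0) := by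
        apply tendsto_pow_atTop_nhds_zero_of_lt_one <;> norm_num
      simpa using tendsto_const_nhds.add this
    exact tendsto_of_tendsto_of_tendsto_of_le_of_le tendsto_const_nhds hup hge hle
  have hcx' : Tendsto c atTop (𝓝[Set.Ici x] x) :=
    tendsto_nhdsWithin_iff.mpr ⟨hcx, Filter.Eventually.of_forall hge⟩
  exact (hf x).tendsto.comp hcx'

/-- One-sided stability bound for the refraction equation. -/
lemma refraction_aux (t η δ b : ℝ) (hη : 0 < η) (hδ : 0 < δ)
    (Xn Xm Un Um : ℝ → ℝ)
    (hUn : Measurable Un) (hUm : Measurable Um)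
    (hXclose : ∀ s ∈ Set.Icc (0:ℝ) t, |Xn s - Xm s| < η)
    (hn : ∀ s ∈ Set.Icc (0:ℝ) t, Un s = Xn s - δ * ∫ v in (0:ℝ)..s,
      (Set.Ioi b).indicator (fun _ => (1:ℝ)) (Un v))
    (hm : ∀ s ∈ Set.Icc (0:ℝ) t, Um s = Xm s - δ * ∫ v in (0:ℝ)..s,
      (Set.Ioi b).indicator (fun _ => (1:ℝ)) (Um v)) :
    ∀ s ∈ Set.Icc (0:ℝ) t, (Un s - Um s) - (Xn s - Xm s) ≤ η := by
  set gn : ℝ → ℝ := fun v => (Set.Ioi b).indicator (fun _ => (1:ℝ)) (Un v) with hgn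
  set gm : ℝ → ℝ := fun v => (Set.Ioi b).indicator (fun _ => (1:ℝ)) (Um v) with hgm
  have hind : ∀ (U : ℝ → ℝ), (fun v => (Set.Ioi b).indicator (fun _ => (1:ℝ)) (U v))
      = (U ⁻¹' Set.Ioi b).indicator (fun _ => (1:ℝ)) := by
    intro U
    funext v
    by_cases h : U v ∈ Set.Ioi b <;> simp [Set.indicator_apply, h]
  have hgn_meas : Measurable gn := by
    rw [hgn, hind]
    exact measurable_const.indicator (hUn measurableSet_Ioi)
  have hgm_meas : Measurable gm := by
    rw [hgm, hind]
    exact measurable_const.indicator (hUm measurableSet_Ioi)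
  have hnonneg : ∀ (U : ℝ → ℝ) v, (0:ℝ) ≤ (Set.Ioi b).indicator (fun _ => (1:ℝ)) (U v) := by
    intro U v
    by_cases h : U v ∈ Set.Ioi b
    · rw [Set.indicator_of_mem h]; norm_num
    · rw [Set.indicator_of_notMem h]
  have hle1 : ∀ (U : ℝ → ℝ) v, (Set.Ioi b).indicator (fun _ => (1:ℝ)) (U v) ≤ 1 := by
    intro U v
    by_cases h : U v ∈ Set.Ioi b
    · rw [Set.indicator_of_mem h]
    · rw [Set.indicator_of_notMem h]; norm_num
  have hint : ∀ (g : ℝ → ℝ), Measurable g → (∀ v, 0 ≤ g v) → (∀ v, g v ≤ 1) →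
      ∀ a c : ℝ, IntervalIntegrable g volume a c := by
    intro g hmeas h0 h1 a c
    rw [intervalIntegrable_iff]
    refine Integrable.mono' (g := fun _ => (1:ℝ)) ?_ hmeas.aestronglyMeasurable.restrict
      (ae_of_all _ fun v => ?_)
    · exact integrableOn_const measure_Ioc_lt_top.ne
    · rw [Real.norm_eq_abs, abs_of_nonneg (h0 v)]; exact h1 v
  have hgn_int : ∀ a c : ℝ, IntervalIntegrable gn volume a c :=
    hint gn hgn_meas (hnonneg Un) (hle1 Un)
  have hgm_int : ∀ a c : ℝ, IntervalIntegrable gm volume a c :=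
    hint gm hgm_meas (hnonneg Um) (hle1 Um)
  set A : ℝ → ℝ := fun s => δ * ((∫ v in (0:ℝ)..s, gm v) - ∫ v in (0:ℝ)..s, gn v) with hA
  have hAcont : Continuous A := by
    apply continuous_const.mul
    exact (intervalIntegral.continuous_primitive hgm_int 0).sub
      (intervalIntegral.continuous_primitive hgn_int 0)
  have hAeq : ∀ s ∈ Set.Icc (0:ℝ) t, (Un s - Um s) - (Xn s - Xm s) = A s := by
    intro s hs
    rw [hn s hs, hm s hs, hA]
    ring
  intro s1 hs1
  by_contra hcon
  push_neg at hcon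
  rw [hAeq s1 hs1] at hcon
  set S : Set ℝ := Set.Icc 0 s1 ∩ A ⁻¹' Set.Iic η with hS
  have h0S : (0:ℝ) ∈ S := by
    constructor
    · exact ⟨le_refl 0, hs1.1⟩
    · show A 0 ≤ η
      rw [hA]
      simp [intervalIntegral.integral_same]
      exact hη.le
  have hSbdd : BddAbove S := ⟨s1, fun x hx => hx.1.2⟩
  have hSclosed : IsClosed S :=
    isClosed_Icc.inter (isClosed_Iic.preimage hAcont)
  set ss : ℝ := sSup S with hss
  have hssmem : ss ∈ S := hSclosed.csSup_mem ⟨0, h0S⟩ hSbdd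
  have hssA : A ss ≤ η := hssmem.2
  have hss0 : 0 ≤ ss := hssmem.1.1
  have hsss1 : ss ≤ s1 := hssmem.1.2
  have hsslt : ss < s1 := by
    rcases lt_or_eq_of_le hsss1 with h | h
    · exact h
    · exfalso; rw [h] at hssA; linarith
  have hgt : ∀ v ∈ Set.Ioc ss s1, η < A v := by
    intro v hv
    by_contra h
    push_neg at h
    have hvS : v ∈ S := ⟨⟨hss0.trans hv.1.le, hv.2⟩, h⟩
    exact absurd (le_csSup hSbdd hvS) (not_le.mpr hv.1)
  have hssge : η ≤ A ss := by
    have htd : Tendsto A (𝓝[>] ss) (𝓝 (A ss)) :=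
      (hAcont.tendsto ss).mono_left nhdsWithin_le_nhds
    refine ge_of_tendsto htd ?_
    filter_upwards [Ioc_mem_nhdsGT_of_mem ⟨le_refl ss, hsslt⟩] with v hv
    exact (hgt v hv).le
  have hpt : ∀ v ∈ Set.Icc ss s1, gm v ≤ gn v := by
    intro v hv
    have hvt : v ∈ Set.Icc 0 t := ⟨hss0.trans hv.1, hv.2.trans hs1.2⟩
    have hAv : η ≤ A v := by
      rcases eq_or_lt_of_le hv.1 with h | h
      · rw [← h]; exact hssge
      · exact (hgt v ⟨h, hv.2⟩).le
    have hX := abs_lt.mp (hXclose v hvt)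
    have hEq := hAeq v hvt
    have hUv : Um v < Un v := by linarith
    by_cases hb : Um v ∈ Set.Ioi b
    · have hb' : Un v ∈ Set.Ioi b := lt_trans hb hUv
      rw [hgn, hgm]
      simp only [Set.indicator_of_mem hb, Set.indicator_of_mem hb']
      exact le_rfl
    · rw [hgm]
      simp only [Set.indicator_of_notMem hb]
      exact hnonneg Un v
  have hmono : (∫ v in ss..s1, gm v) ≤ ∫ v in ss..s1, gn v :=
    intervalIntegral.integral_mono_on hsslt.le (hgm_int ss s1) (hgn_int ss s1) hpt
  have hsplit_n : (∫ v in (0:ℝ)..ss, gn v) + (∫ v in ss..s1, gn v) = ∫ v in (0:ℝ)..s1, gn v :=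
    intervalIntegral.integral_add_adjacent_intervals (hgn_int 0 ss) (hgn_int ss s1)
  have hsplit_m : (∫ v in (0:ℝ)..ss, gm v) + (∫ v in ss..s1, gm v) = ∫ v in (0:ℝ)..s1, gm v :=
    intervalIntegral.integral_add_adjacent_intervals (hgm_int 0 ss) (hgm_int ss s1)
  have hkey : A s1 ≤ A ss := by
    rw [hA]
    have hsub : (∫ v in (0:ℝ)..s1, gm v) - (∫ v in (0:ℝ)..s1, gn v)
        ≤ (∫ v in (0:ℝ)..ss, gm v) - ∫ v in (0:ℝ)..ss, gn v := by
      rw [← hsplit_m, ← hsplit_n]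
      linarith
    exact mul_le_mul_of_nonneg_left hsub hδ.le
  linarith

open MeasureTheory Set

/-- Stability of the refraction equation: if the driving càdlàg paths are
uniformly `η`-close on `[0,t]`, then the corresponding solutions are
`2η`-close, and the drift difference term is bounded by `η`. -/
theorem refraction_stability (t η δ b : ℝ) (ht : 0 ≤ t) (hη : 0 < η) (hδ : 0 < δ)
    (Xn Xm Un Um : ℝ → ℝ)
    (hXnrc : ∀ s, ContinuousWithinAt Xn (Set.Ici s) s)
    (hXmrc : ∀ s, ContinuousWithinAt Xm (Set.Ici s) s)
    (hUnrc : ∀ s, ContinuousWithinAt Un (Set.Ici s) s)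
    (hUmrc : ∀ s, ContinuousWithinAt Um (Set.Ici s) s)
    (hXclose : ∀ s ∈ Set.Icc (0:ℝ) t, |Xn s - Xm s| < η)
    (hn : ∀ s ∈ Set.Icc (0:ℝ) t, Un s = Xn s - δ * ∫ v in (0:ℝ)..s,
      (Set.Ioi b).indicator (fun _ => (1:ℝ)) (Un v))
    (hm : ∀ s ∈ Set.Icc (0:ℝ) t, Um s = Xm s - δ * ∫ v in (0:ℝ)..s,
      (Set.Ioi b).indicator (fun _ => (1:ℝ)) (Um v)) :
    (∀ s ∈ Set.Icc (0:ℝ) t, |Un s - Um s| < 2 * η) ∧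
    (∀ s ∈ Set.Icc (0:ℝ) t, |(Un s - Um s) - (Xn s - Xm s)| ≤ η) := by
  have hUnM : Measurable Un := measurable_of_rightCont Un hUnrc
  have hUmM : Measurable Um := measurable_of_rightCont Um hUmrc
  have haux1 := refraction_aux t η δ b hη hδ Xn Xm Un Um hUnM hUmM hXclose hn hm
  have haux2 := refraction_aux t η δ b hη hδ Xm Xn Um Un hUmM hUnM
    (fun s hs => by rw [abs_sub_comm]; exact hXclose s hs) hm hn
  constructor
  · intro s hs
    have h1 := haux1 s hs
    have h2 := haux2 s hs
    have h3 := abs_lt.mp (hXclose s hs)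
    rw [abs_lt]
    constructor <;> linarith
  · intro s hs
    have h1 := haux1 s hs
    have h2 := haux2 s hs
    rw [abs_le]
    constructor <;> linarith
end

section
/- Let $X$ be a spectrally negative Lévy process of bounded variation with drift $c$ and Lévy measure $\Pi$, with $q$-scale function $W^{(q)}$. Then for all $b \geq 0$ and $\lambda > \Phi(q)$: $\int_0^\infty \int_{(y,\infty)} e^{-\lambda y}\, W^{(q)}(y - \theta + b)\, \Pi(d\theta)\, dy = c\, W^{(q)}(b) - (\psi(\lambda) - q)\, e^{\lambda b} \int_b^\infty e^{-\lambda x} W^{(q)}(x)\, dx$. -/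
open MeasureTheory Set Filter Topology Real Polynomial

lemma my_integral_exp_Ioi {σ : ℝ} (hσ : 0 < σ) (a : ℝ) :
    ∫ x in Ioi a, Real.exp (-σ * x) = Real.exp (-σ * a) / σ := by
  have h : ∀ x ∈ Ici a, HasDerivAt (fun x => -Real.exp (-σ * x) / σ) (Real.exp (-σ * x)) x := by
    intro x _
    have : HasDerivAt (fun x => -σ * x) (-σ) x := by
      simpa using (hasDerivAt_id x).const_mul (-σ)
    have := ((this.exp).neg).div_const σ
    refine this.congr_deriv ?_
    rw [div_eq_iff hσ.ne']; ring
  have hint : IntegrableOn (fun x => Real.exp (-σ * x)) (Ioi a) := exp_neg_integrableOn_Ioi a hσ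
  have htend : Tendsto (fun x => -Real.exp (-σ * x) / σ) atTop (𝓝 0) := by
    have : Tendsto (fun x : ℝ => -σ * x) atTop atBot := by
      exact tendsto_id.const_mul_atTop_of_neg (by linarith)
    have := (Real.tendsto_exp_atBot.comp this).neg.div_const σ
    simpa using this
  have := integral_Ioi_of_hasDerivAt_of_tendsto' h hint htend
  rw [this]; field_simp; ring

lemma my_measurable_W {W : ℝ → ℝ} (hWneg : ∀ x < (0:ℝ), W x = 0)
    (hWc : ContinuousOn W (Ici 0)) : Measurable W := by
  apply measurable_of_continuousOn_compl_singleton (0:ℝ)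
  intro x hx
  have hx' : x ≠ 0 := by simpa using hx
  rcases hx'.lt_or_gt with h | h
  · have hev : W =ᶠ[𝓝 x] (fun _ => 0) := by
      filter_upwards [Iio_mem_nhds h] with y hy using hWneg y hy
    exact (continuousAt_const.congr hev.symm).continuousWithinAt
  · exact (hWc.continuousAt (Ici_mem_nhds h)).continuousWithinAt

variable {ν : Measure ℝ}

lemma my_fin (hνint : ∫⁻ x in Set.Ioi (0:ℝ), ENNReal.ofReal (min 1 x) ∂ν ≠ ⊤)
    {ε : ℝ} (hε : 0 < ε) : ν (Ici ε) < ⊤ := by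
  have h2 : ∫⁻ _ in Ici ε, ENNReal.ofReal (min 1 ε) ∂ν
      ≤ ∫⁻ x in Ici ε, ENNReal.ofReal (min 1 x) ∂ν := by
    apply setLIntegral_mono' measurableSet_Ici
    intro x hx
    exact ENNReal.ofReal_le_ofReal (min_le_min le_rfl hx)
  have h3 : ∫⁻ x in Ici ε, ENNReal.ofReal (min 1 x) ∂ν
      ≤ ∫⁻ x in Ioi 0, ENNReal.ofReal (min 1 x) ∂ν :=
    lintegral_mono_set (fun x hx => lt_of_lt_of_le hε hx)
  have key : ENNReal.ofReal (min 1 ε) * ν (Ici ε)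
      ≤ ∫⁻ x in Ioi 0, ENNReal.ofReal (min 1 x) ∂ν := by
    rw [← setLIntegral_const]
    exact h2.trans h3
  have hne : ENNReal.ofReal (min 1 ε) ≠ 0 := by
    simp only [ne_eq, ENNReal.ofReal_eq_zero, not_le, lt_min_iff]
    constructor <;> linarith
  by_contra h
  push_neg at h
  rw [top_le_iff.mp h, ENNReal.mul_top hne, top_le_iff] at key
  exact hνint key

lemma my_sigmaFinite
    (hνint : ∫⁻ x in Set.Ioi (0:ℝ), ENNReal.ofReal (min 1 x) ∂ν ≠ ⊤) :
    SigmaFinite (ν.restrict (Ioi 0)) := by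
  refine ⟨⟨⟨fun n => Iic 0 ∪ Ici (1/(n+1)), fun _ => trivial, fun n => ?_, ?_⟩⟩⟩
  · rw [Measure.restrict_apply' measurableSet_Ioi]
    have hsub : (Iic 0 ∪ Ici (1/(n+1:ℝ))) ∩ Ioi 0 ⊆ Ici (1/(n+1:ℝ)) := by
      rintro x ⟨hx1 | hx1, hx2⟩
      · exact absurd (mem_Ioi.mp hx2) (not_lt.mpr hx1)
      · exact hx1
    exact lt_of_le_of_lt (measure_mono hsub) (my_fin hνint (by positivity))
  · ext x
    simp only [mem_iUnion, mem_union, mem_univ, iff_true]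
    rcases le_or_gt x 0 with h | h
    · exact ⟨0, Or.inl h⟩
    · obtain ⟨n, hn⟩ := exists_nat_one_div_lt h
      exact ⟨n, Or.inr hn.le⟩

lemma my_min_integrable (hνint : ∫⁻ x in Set.Ioi (0:ℝ), ENNReal.ofReal (min 1 x) ∂ν ≠ ⊤) :
    Integrable (fun x => min 1 x) (ν.restrict (Ioi 0)) := by
  constructor
  · exact (continuous_const.min continuous_id).aestronglyMeasurable
  · rw [HasFiniteIntegral]
    calc ∫⁻ x, ‖min 1 x‖₊ ∂(ν.restrict (Ioi 0))
        = ∫⁻ x in Ioi 0, ENNReal.ofReal (min 1 x) ∂ν := by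
          apply setLIntegral_congr_fun measurableSet_Ioi
          intro x hx
          exact (Real.enorm_eq_ofReal (le_min zero_le_one hx.le))
      _ < ⊤ := hνint.lt_top

lemma my_integrable_of_bound (hνint : ∫⁻ x in Set.Ioi (0:ℝ), ENNReal.ofReal (min 1 x) ∂ν ≠ ⊤)
    {g : ℝ → ℝ} (hg : AEStronglyMeasurable g (ν.restrict (Ioi 0))) {C : ℝ}
    (hb : ∀ x ∈ Ioi (0:ℝ), |g x| ≤ C * min 1 x) :
    Integrable g (ν.restrict (Ioi 0)) := by
  apply Integrable.mono' ((my_min_integrable hνint).const_mul C) hg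
  filter_upwards [ae_restrict_mem measurableSet_Ioi] with x hx
  simpa [Real.norm_eq_abs] using hb x hx

/-- Laplace transform of a primitive. -/
lemma my_laplace_primitive {f : ℝ → ℝ} (hm : Measurable f) (hf : IntegrableOn f (Ioi 0))
    {σ : ℝ} (hσ : 0 < σ) :
    ∫ t in Ioi 0, Real.exp (-σ * t) * (∫ s in Ioc 0 t, f s)
      = (1/σ) * ∫ s in Ioi 0, Real.exp (-σ * s) * f s := by
  set μ1 := volume.restrict (Ioi (0:ℝ)) with hμ1
  set F : ℝ × ℝ → ℝ := fun p => if p.2 ≤ p.1 then Real.exp (-σ * p.1) * f p.2 else 0 with hF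
  have hFm : Measurable F := by
    apply Measurable.ite (measurableSet_le measurable_snd measurable_fst)
    · exact ((measurable_fst.const_mul (-σ)).exp).mul (hm.comp measurable_snd)
    · exact measurable_const
  have hslice : ∀ s : ℝ, Integrable (fun t => F (t, s)) μ1 := by
    intro s
    apply Integrable.mono' ((exp_neg_integrableOn_Ioi 0 hσ).mul_const |f s|)
    · exact (hFm.comp (measurable_id.prodMk measurable_const)).aestronglyMeasurable
    · filter_upwards with t
      simp only [hF]
      split_ifs with h
      · rw [Real.norm_eq_abs, abs_mul, abs_of_pos (Real.exp_pos _)]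
      · simpa using mul_nonneg (Real.exp_pos (-(σ*t))).le (abs_nonneg (f s))
  have htnorm : ∀ s ∈ Ioi (0:ℝ), (∫ t, ‖F (t, s)‖ ∂μ1) = |f s| * (Real.exp (-σ * s) / σ) := by
    intro s hs
    have h1 : ∀ t, ‖F (t, s)‖ = (Ici s).indicator (fun t => Real.exp (-σ * t) * |f s|) t := by
      intro t
      simp only [hF, Set.indicator_apply, mem_Ici]
      split_ifs with h
      · rw [Real.norm_eq_abs, abs_mul, abs_of_pos (Real.exp_pos _)]
      · simp
    simp_rw [h1]
    rw [hμ1, integral_indicator measurableSet_Ici, Measure.restrict_restrict measurableSet_Ici]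
    have hIci : Ici s ∩ Ioi 0 = Ici s :=
      inter_eq_self_of_subset_left (fun x hx => mem_Ioi.mpr (lt_of_lt_of_le (mem_Ioi.mp hs) (mem_Ici.mp hx)))
    rw [hIci, integral_Ici_eq_integral_Ioi, integral_mul_const, my_integral_exp_Ioi hσ]
    ring
  have htval : ∀ s ∈ Ioi (0:ℝ), (∫ t, F (t, s) ∂μ1) = (1/σ) * (Real.exp (-σ * s) * f s) := by
    intro s hs
    have h1 : ∀ t, F (t, s) = (Ici s).indicator (fun t => Real.exp (-σ * t) * f s) t := by
      intro t
      simp only [hF, Set.indicator_apply, mem_Ici]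
    simp_rw [h1]
    rw [hμ1, integral_indicator measurableSet_Ici, Measure.restrict_restrict measurableSet_Ici]
    have hIci : Ici s ∩ Ioi 0 = Ici s :=
      inter_eq_self_of_subset_left (fun x hx => mem_Ioi.mpr (lt_of_lt_of_le (mem_Ioi.mp hs) (mem_Ici.mp hx)))
    rw [hIci, integral_Ici_eq_integral_Ioi, integral_mul_const, my_integral_exp_Ioi hσ]
    ring
  have hprod : Integrable F (μ1.prod μ1) := by
    rw [integrable_prod_iff' hFm.aestronglyMeasurable]
    constructor
    · filter_upwards with s using hslice s
    · have hgood : Integrable (fun s => |f s| * (Real.exp (-σ * s) / σ)) μ1 := by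
        apply Integrable.mono' (hf.abs.mul_const (1/σ))
        · exact (hm.abs.mul ((measurable_id.const_mul (-σ)).exp.div_const σ)).aestronglyMeasurable
        · filter_upwards [ae_restrict_mem measurableSet_Ioi] with s hs
          have he : Real.exp (-σ * s) ≤ 1 := by
            rw [Real.exp_le_one_iff]
            nlinarith [mem_Ioi.mp hs]
          rw [Real.norm_eq_abs, abs_mul, abs_abs, abs_of_pos (by positivity : (0:ℝ) < Real.exp (-σ*s)/σ)]
          apply mul_le_mul_of_nonneg_left _ (abs_nonneg _)
          rw [div_le_div_iff₀ hσ hσ, one_mul]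
          nlinarith
      apply hgood.congr
      filter_upwards [ae_restrict_mem measurableSet_Ioi] with s hs
      exact (htnorm s hs).symm
  have swap := integral_integral_swap (f := fun t s => F (t, s)) (μ := μ1) (ν := μ1) hprod
  have hL : ∀ t ∈ Ioi (0:ℝ), (∫ s, F (t, s) ∂μ1) = Real.exp (-σ * t) * ∫ s in Ioc 0 t, f s := by
    intro t ht
    have h1 : ∀ s, F (t, s) = (Iic t).indicator (fun s => Real.exp (-σ * t) * f s) s := by
      intro s; simp only [hF, Set.indicator_apply, mem_Iic]
    simp_rw [h1]
    rw [hμ1, integral_indicator measurableSet_Iic, Measure.restrict_restrict measurableSet_Iic]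
    have : Iic t ∩ Ioi 0 = Ioc 0 t := by rw [inter_comm, Ioi_inter_Iic]
    rw [this, integral_const_mul]
  calc ∫ t in Ioi 0, Real.exp (-σ * t) * (∫ s in Ioc 0 t, f s)
      = ∫ t, (∫ s, F (t, s) ∂μ1) ∂μ1 := by
        rw [hμ1]
        exact setIntegral_congr_fun measurableSet_Ioi (fun t ht => (hL t ht).symm)
    _ = ∫ s, (∫ t, F (t, s) ∂μ1) ∂μ1 := swap
    _ = ∫ s in Ioi 0, (1/σ) * (Real.exp (-σ * s) * f s) := by
        rw [hμ1]
        exact setIntegral_congr_fun measurableSet_Ioi (fun s hs => htval s hs)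
    _ = (1/σ) * ∫ s in Ioi 0, Real.exp (-σ * s) * f s := integral_const_mul _ _

/-- Shift lemma. -/
lemma my_shift {g : ℝ → ℝ} (hg0 : ∀ t ≤ (0:ℝ), g t = 0) {β θ : ℝ} (hθ : 0 ≤ θ) :
    ∫ a in Ioi 0, Real.exp (-β * a) * g (a - θ)
      = Real.exp (-β * θ) * ∫ a in Ioi 0, Real.exp (-β * a) * g a := by
  rw [← integral_indicator measurableSet_Ioi, ← integral_indicator measurableSet_Ioi]
  have key : ∀ a : ℝ, (Ioi (0:ℝ)).indicator (fun a => Real.exp (-β * a) * g (a - θ)) a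
      = (fun s => Real.exp (-β * θ) * ((Ioi (0:ℝ)).indicator (fun s => Real.exp (-β * s) * g s) s)) (a - θ) := by
    intro a
    simp only [Set.indicator_apply, mem_Ioi]
    rcases le_or_gt (a - θ) 0 with h | h
    · rw [if_neg (not_lt.mpr h), hg0 _ h, mul_zero]
      split_ifs <;> simp
    · rw [if_pos h, if_pos (by linarith)]
      rw [← mul_assoc, ← Real.exp_add]
      ring_nf
  simp_rw [key]
  rw [integral_sub_right_eq_self
    (fun s => Real.exp (-β * θ) * ((Ioi (0:ℝ)).indicator (fun s => Real.exp (-β * s) * g s) s)) θ]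
  rw [integral_const_mul]

/-- Uniqueness of Laplace transforms: a function whose transform vanishes for all `β > β0`
vanishes on `[0, ∞)`. -/
lemma my_laplace_unique {h : ℝ → ℝ} (hm : Measurable h) (hcont : ContinuousOn h (Ici 0))
    {β0 : ℝ} (hβ0 : 0 ≤ β0)
    (hint : ∀ β > β0, IntegrableOn (fun s => Real.exp (-β * s) * h s) (Ioi 0))
    (hvan : ∀ β > β0, ∫ s in Ioi 0, Real.exp (-β * s) * h s = 0) :
    ∀ t ≥ (0:ℝ), h t = 0 := by
  set β1 := β0 + 1 with hβ1
  have hβ1gt : β1 > β0 := by rw [hβ1]; linarith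
  set φ : ℝ → ℝ := (Ioi (0:ℝ)).indicator (fun s => Real.exp (-β1 * s) * h s) with hφ
  have hφm : Measurable φ :=
    (((measurable_id.const_mul (-β1)).exp.mul hm).indicator measurableSet_Ioi)
  have hφint : Integrable φ volume := by
    rw [hφ, integrable_indicator_iff measurableSet_Ioi]; exact hint β1 hβ1gt
  set u : ℝ → ℝ := fun t => ∫ s in (0:ℝ)..t, φ s with hu
  have hucont : Continuous u :=
    intervalIntegral.continuous_primitive (fun a b => hφint.intervalIntegrable) 0
  have huIoc : ∀ t, u t = ∫ s in Ioc 0 t, φ s := by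
    intro t
    show (∫ s in (0:ℝ)..t, φ s) = _
    rcases le_or_gt 0 t with h' | h'
    · exact intervalIntegral.integral_of_le h'
    · rw [intervalIntegral.integral_of_ge h'.le, Ioc_eq_empty (not_lt.mpr h'.le)]
      have h1 : ∫ s in Ioc t 0, φ s = 0 := by
        apply setIntegral_eq_zero_of_forall_eq_zero
        intro x hx
        rw [hφ, indicator_of_notMem (by simp only [mem_Ioi, not_lt]; exact hx.2)]
      rw [h1]; simp
  have hu0 : u 0 = 0 := intervalIntegral.integral_same
  -- u tends to 0 at infinity
  have hφIoi : ∫ s in Ioi 0, φ s = 0 := by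
    rw [setIntegral_congr_fun measurableSet_Ioi
      (fun s hs => by rw [hφ, indicator_of_mem hs] : EqOn φ (fun s => Real.exp (-β1 * s) * h s) (Ioi 0))]
    exact hvan β1 hβ1gt
  have hulim : Tendsto u atTop (𝓝 0) := by
    have := intervalIntegral_tendsto_integral_Ioi 0 hφint.integrableOn tendsto_id
    rwa [hφIoi] at this
  -- moments of u vanish
  have hmom : ∀ σ : ℝ, 0 < σ → ∫ t in Ioi 0, Real.exp (-σ * t) * u t = 0 := by
    intro σ hσ
    have h1 : ∫ t in Ioi 0, Real.exp (-σ * t) * u t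
        = (1/σ) * ∫ s in Ioi 0, Real.exp (-σ * s) * φ s := by
      rw [← my_laplace_primitive hφm hφint.integrableOn hσ]
      exact setIntegral_congr_fun measurableSet_Ioi (fun t ht => by rw [huIoc t])
    rw [h1]
    have h2 : ∫ s in Ioi 0, Real.exp (-σ * s) * φ s
        = ∫ s in Ioi 0, Real.exp (-(σ + β1) * s) * h s := by
      apply setIntegral_congr_fun measurableSet_Ioi
      intro s hs
      simp only [hφ, Set.indicator_of_mem hs]
      rw [← mul_assoc, ← Real.exp_add]
      have e : -σ * s + -β1 * s = -(σ + β1) * s := by ring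
      rw [e]
    rw [h2, hvan (σ + β1) (by linarith), mul_zero]
  -- substitution x = exp (-t)
  set g : ℝ → ℝ := fun x => u (-Real.log x) with hg
  have hgC : ∀ x : ℝ, 0 < x → ContinuousAt g x := by
    intro x hx
    exact hucont.continuousAt.comp ((Real.continuousAt_log (ne_of_gt hx)).neg)
  have hg1 : g 1 = 0 := by rw [hg]; simp [hu0]
  have hg0 : g 0 = 0 := by rw [hg]; simp [hu0]
  have hgmom : ∀ n : ℕ, ∫ x in Ioo (0:ℝ) 1, x ^ n * g x = 0 := by
    intro n
    have hderiv : ∀ t ∈ Ioi (0:ℝ),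
        HasDerivWithinAt (fun t => Real.exp (-t)) (-Real.exp (-t)) (Ioi 0) t := by
      intro t _
      have := ((hasDerivAt_id t).neg).exp
      simpa using this.hasDerivWithinAt
    have hinj : InjOn (fun t => Real.exp (-t)) (Ioi 0) := by
      intro a _ b _ hab
      simpa using Real.exp_injective hab
    have himg : (fun t => Real.exp (-t)) '' (Ioi 0) = Ioo 0 1 := by
      ext x
      simp only [mem_image, mem_Ioo, mem_Ioi]
      constructor
      · rintro ⟨t, ht, rfl⟩
        exact ⟨Real.exp_pos _, by rw [Real.exp_lt_one_iff]; linarith⟩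
      · rintro ⟨hx0, hx1⟩
        exact ⟨-Real.log x, by simpa using Real.log_neg hx0 hx1, by rw [neg_neg, Real.exp_log hx0]⟩
    have := integral_image_eq_integral_abs_deriv_smul measurableSet_Ioi hderiv hinj
      (fun x => x ^ n * g x)
    rw [himg] at this
    rw [this]
    have heq : EqOn (fun t => |(-Real.exp (-t))| • ((Real.exp (-t)) ^ n * g (Real.exp (-t))))
        (fun t => Real.exp (-((n:ℝ)+1) * t) * u t) (Ioi 0) := by
      intro t _
      simp only [abs_neg, abs_of_pos (Real.exp_pos (-t)), smul_eq_mul, hg, Real.log_exp, neg_neg]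
      rw [← Real.exp_nat_mul, ← mul_assoc, ← Real.exp_add]
      ring_nf
    rw [setIntegral_congr_fun measurableSet_Ioi heq]
    exact hmom ((n:ℝ)+1) (by positivity)
  -- continuity of g on Icc 0 1
  have hgcont : ContinuousOn g (Icc 0 1) := by
    intro x hx
    rcases eq_or_lt_of_le hx.1 with rfl | hx0
    · have htend : Tendsto g (𝓝[>] (0:ℝ)) (𝓝 0) := by
        have h1 : Tendsto (fun x : ℝ => -Real.log x) (𝓝[>] 0) atTop :=
          tendsto_neg_atBot_atTop.comp Real.tendsto_log_nhdsGT_zero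
        exact hulim.comp h1
      rw [ContinuousWithinAt, hg0]
      have hmono : 𝓝[Icc (0:ℝ) 1] 0 ≤ 𝓝[insert 0 (Ioi 0)] (0:ℝ) :=
        nhdsWithin_mono _ (fun y hy => by
          rcases eq_or_lt_of_le hy.1 with rfl | hy0
          exacts [mem_insert _ _, mem_insert_of_mem _ hy0])
      apply Tendsto.mono_left _ hmono
      rw [nhdsWithin_insert, Filter.tendsto_sup]
      refine ⟨?_, htend⟩
      have : g 0 = 0 := hg0
      simpa [this] using tendsto_pure_nhds g 0
    · exact (hgC x hx0).continuousWithinAt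
  have hIoc : ∀ (f : ℝ → ℝ), (∫ x in Ioo (0:ℝ) 1, f x) = ∫ x in (0:ℝ)..1, f x := by
    intro f
    rw [intervalIntegral.integral_of_le (by norm_num : (0:ℝ) ≤ 1), integral_Ioc_eq_integral_Ioo]
  have hmono : ∀ n : ℕ, (∫ x in (0:ℝ)..1, x ^ n * g x) = 0 := fun n => by
    rw [← hIoc]; exact hgmom n
  have hpoly : ∀ p : ℝ[X], (∫ x in (0:ℝ)..1, g x * p.eval x) = 0 := by
    intro p
    have hexp : ∀ x : ℝ, g x * p.eval x
        = ∑ i ∈ Finset.range (p.natDegree + 1), p.coeff i * (x ^ i * g x) := by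
      intro x
      rw [Polynomial.eval_eq_sum_range, Finset.mul_sum]
      apply Finset.sum_congr rfl
      intro i _
      ring
    simp_rw [hexp]
    rw [intervalIntegral.integral_finset_sum]
    · apply Finset.sum_eq_zero
      intro i _
      rw [intervalIntegral.integral_const_mul, hmono i, mul_zero]
    · intro i _
      apply ContinuousOn.intervalIntegrable
      rw [uIcc_of_le (by norm_num : (0:ℝ) ≤ 1)]
      exact continuousOn_const.mul ((continuousOn_pow i).mul hgcont)
  have hgint : IntervalIntegrable g volume 0 1 := by
    apply ContinuousOn.intervalIntegrable
    rwa [uIcc_of_le (by norm_num : (0:ℝ) ≤ 1)]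
  have hggint : IntervalIntegrable (fun x => g x * g x) volume 0 1 := by
    apply ContinuousOn.intervalIntegrable
    rw [uIcc_of_le (by norm_num : (0:ℝ) ≤ 1)]
    exact hgcont.mul hgcont
  have hJ0 : (∫ x in (0:ℝ)..1, g x * g x) = 0 := by
    set J := ∫ x in (0:ℝ)..1, g x * g x with hJ
    set C := ∫ x in (0:ℝ)..1, |g x| with hC
    have hCnn : 0 ≤ C :=
      intervalIntegral.integral_nonneg (by norm_num) (fun x _ => abs_nonneg _)
    have hle : ∀ ε : ℝ, 0 < ε → J ≤ ε * C := by
      intro ε hε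
      obtain ⟨p, hp⟩ := exists_polynomial_near_of_continuousOn 0 1 g hgcont ε hε
      have hgpint : IntervalIntegrable (fun x => g x * p.eval x) volume 0 1 := by
        apply ContinuousOn.intervalIntegrable
        rw [uIcc_of_le (by norm_num : (0:ℝ) ≤ 1)]
        exact hgcont.mul p.continuous.continuousOn
      have hpint : IntervalIntegrable (fun x => g x * (g x - p.eval x)) volume 0 1 := by
        have : (fun x => g x * (g x - p.eval x)) = fun x => g x * g x - g x * p.eval x := by
          funext x; ring
        rw [this]
        exact hggint.sub hgpint
      have heq : J = ∫ x in (0:ℝ)..1, g x * (g x - p.eval x) := by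
        have he2 : (fun x => g x * (g x - p.eval x)) = fun x => g x * g x - g x * p.eval x := by
          funext x; ring
        rw [he2, intervalIntegral.integral_sub hggint hgpint, hpoly p, sub_zero, hJ]
      rw [heq]
      have hbound : ∀ x ∈ Icc (0:ℝ) 1, g x * (g x - p.eval x) ≤ ε * |g x| := by
        intro x hx
        calc g x * (g x - p.eval x) ≤ |g x * (g x - p.eval x)| := le_abs_self _
          _ = |g x| * |g x - p.eval x| := abs_mul _ _
          _ ≤ |g x| * ε := mul_le_mul_of_nonneg_left
              (by rw [abs_sub_comm]; exact (hp x hx).le) (abs_nonneg _)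
          _ = ε * |g x| := mul_comm _ _
      calc (∫ x in (0:ℝ)..1, g x * (g x - p.eval x))
          ≤ ∫ x in (0:ℝ)..1, ε * |g x| :=
            intervalIntegral.integral_mono_on (by norm_num) hpint
              ((hgint.abs).const_mul ε) hbound
        _ = ε * C := by rw [intervalIntegral.integral_const_mul]
    have hnn : 0 ≤ J :=
      intervalIntegral.integral_nonneg (by norm_num) (fun x _ => mul_self_nonneg _)
    by_contra hne
    have hposJ : 0 < J := lt_of_le_of_ne hnn (Ne.symm hne)
    have hkey := hle (J / (2 * (C + 1))) (by positivity)
    have h2 : J / (2 * (C + 1)) * C < J := by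
      rw [div_mul_eq_mul_div, div_lt_iff₀ (by positivity)]
      nlinarith [mul_nonneg hnn hCnn]
    linarith
  have hgg_ae : ∀ᵐ x ∂(volume.restrict (Ioc (0:ℝ) 1)), g x * g x = 0 := by
    have hint2 : Integrable (fun x => g x * g x) (volume.restrict (Ioc (0:ℝ) 1)) := by
      have := hggint
      rwa [intervalIntegrable_iff_integrableOn_Ioc_of_le (by norm_num : (0:ℝ) ≤ 1)] at this
    apply (integral_eq_zero_iff_of_nonneg_ae
      (Eventually.of_forall (fun x => mul_self_nonneg (g x))) hint2).mp
    rw [← intervalIntegral.integral_of_le (by norm_num : (0:ℝ) ≤ 1)]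
    exact hJ0
  have hgzero : ∀ x ∈ Ioo (0:ℝ) 1, g x = 0 := by
    by_contra hcontra
    push_neg at hcontra
    obtain ⟨x0, hx0, hgx0⟩ := hcontra
    set S := {x | x ∈ Ioo (0:ℝ) 1 ∧ g x ≠ 0} with hS
    have hSopen : IsOpen S := by
      rw [isOpen_iff_mem_nhds]
      rintro x ⟨hx, hgx⟩
      have h1 : ∀ᶠ y in 𝓝 x, g y ≠ 0 := (hgC x hx.1).eventually_ne hgx
      have h2 : ∀ᶠ y in 𝓝 x, y ∈ Ioo (0:ℝ) 1 := isOpen_Ioo.mem_nhds hx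
      filter_upwards [h1, h2] with y hy1 hy2 using ⟨hy2, hy1⟩
    have hSpos : 0 < volume S := hSopen.measure_pos volume ⟨x0, hx0, hgx0⟩
    have hSzero : volume S = 0 := by
      have h1 := hgg_ae
      rw [ae_restrict_iff' measurableSet_Ioc, ae_iff] at h1
      apply measure_mono_null _ h1
      rintro x ⟨hx, hgx⟩
      simp only [mem_setOf_eq, not_forall]
      exact ⟨⟨hx.1, hx.2.le⟩, mul_ne_zero hgx hgx⟩
    exact absurd hSzero (ne_of_gt hSpos)
  have hu_zero : ∀ t, 0 ≤ t → u t = 0 := by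
    intro t ht
    rcases eq_or_lt_of_le ht with rfl | ht0
    · exact hu0
    · have hx : Real.exp (-t) ∈ Ioo (0:ℝ) 1 :=
        ⟨Real.exp_pos _, by rw [Real.exp_lt_one_iff]; linarith⟩
      have := hgzero _ hx
      simpa [hg, Real.log_exp] using this
  have hpos : ∀ t, 0 < t → h t = 0 := by
    intro t ht0
    have huev : u =ᶠ[𝓝 t] (fun _ => 0) := by
      filter_upwards [isOpen_Ioi.mem_nhds ht0] with y hy using hu_zero y (le_of_lt hy)
    have hφcont : ContinuousAt φ t := by
      have hev : φ =ᶠ[𝓝 t] (fun s => Real.exp (-β1 * s) * h s) := by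
        filter_upwards [isOpen_Ioi.mem_nhds ht0] with y hy
        rw [hφ, indicator_of_mem hy]
      have hc : ContinuousAt (fun s => Real.exp (-β1 * s) * h s) t := by
        apply ContinuousAt.mul
        · exact (Real.continuous_exp.comp (continuous_const.mul continuous_id)).continuousAt
        · exact hcont.continuousAt (Ici_mem_nhds ht0)
      exact hc.congr hev.symm
    have hd1 : HasDerivAt u (φ t) t :=
      intervalIntegral.integral_hasDerivAt_right hφint.intervalIntegrable
        hφm.stronglyMeasurable.stronglyMeasurableAtFilter hφcont
    have hd0 : HasDerivAt u 0 t :=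
      (hasDerivAt_const t (0:ℝ)).congr_of_eventuallyEq huev
    have hφt : φ t = 0 := hd1.unique hd0
    rw [hφ, indicator_of_mem (mem_Ioi.mpr ht0)] at hφt
    rcases mul_eq_zero.mp hφt with h' | h'
    · exact absurd h' (Real.exp_ne_zero _)
    · exact h'
  intro t ht
  rcases eq_or_lt_of_le ht with rfl | ht0
  · have h1 : Tendsto h (𝓝[>] (0:ℝ)) (𝓝 (h 0)) :=
      (hcont 0 self_mem_Ici).mono_left (nhdsWithin_mono _ Ioi_subset_Ici_self)
    have h2 : Tendsto h (𝓝[>] (0:ℝ)) (𝓝 0) := by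
      apply Tendsto.congr' _ tendsto_const_nhds
      filter_upwards [self_mem_nhdsWithin] with x hx
      exact (hpos x hx).symm
    exact tendsto_nhds_unique h1 h2
  · exact hpos t ht0

set_option maxHeartbeats 2000000 in
/-- Laplace transform identity for a bounded variation spectrally negative
Lévy process with drift `c`, Lévy measure `ν` and `q`-scale function `W`:
for `b ≥ 0` and `lam > Φ(q)`,
`∫_0^∞ ∫_{(y,∞)} e^{-lam y} W(y-θ+b) ν(dθ) dy
  = c W(b) - (ψ(lam)-q) e^{lam b} ∫_b^∞ e^{-lam x} W(x) dx`. -/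
theorem bv_scale_laplace_identity
    (c q Φq : ℝ) (hc : 0 < c) (hq : 0 ≤ q)
    (ν : MeasureTheory.Measure ℝ) (ψ W : ℝ → ℝ)
    (hν0 : ν (Set.Iic 0) = 0)
    (hνint : ∫⁻ x in Set.Ioi (0:ℝ), ENNReal.ofReal (min 1 x) ∂ν ≠ ⊤)
    (hψ : ∀ θ ≥ (0:ℝ),
      ψ θ = c * θ - ∫ x in Set.Ioi (0:ℝ), (1 - Real.exp (-θ * x)) ∂ν)
    (hWneg : ∀ x < (0:ℝ), W x = 0)
    (hWc : ContinuousOn W (Set.Ici 0))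
    (hΦ0 : 0 ≤ Φq) (hΦroot : ψ Φq = q) (hΦmax : ∀ θ > Φq, q < ψ θ)
    (hWLap : ∀ β > Φq,
      ∫ x in Set.Ioi (0:ℝ), Real.exp (-β * x) * W x = 1 / (ψ β - q)) :
    ∀ b ≥ (0:ℝ), ∀ lam > Φq,
      (∫ y in Set.Ioi (0:ℝ),
          ∫ θ in Set.Ioi y, Real.exp (-lam * y) * W (y - θ + b) ∂ν)
        = c * W b - (ψ lam - q) * Real.exp (lam * b)
            * ∫ x in Set.Ioi b, Real.exp (-lam * x) * W x := by
  intro b hb lam hlam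
  have hWm : Measurable W := my_measurable_W hWneg hWc
  have hlam0 : 0 < lam := lt_of_le_of_lt hΦ0 hlam
  have hE1 : 0 < ψ lam - q := sub_pos.mpr (hΦmax lam hlam)
  haveI hSF : SigmaFinite (ν.restrict (Ioi 0)) := my_sigmaFinite hνint
  -- integrability of the transformed scale function
  have hfi : ∀ β, Φq < β → IntegrableOn (fun x => Real.exp (-β * x) * W x) (Ioi 0) := by
    intro β hβ
    by_contra hni
    have h0 : (∫ x in Ioi (0:ℝ), Real.exp (-β * x) * W x) = 0 := integral_undef hni
    rw [hWLap β hβ] at h0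
    exact (one_div_ne_zero (sub_pos.mpr (hΦmax β hβ)).ne') h0
  set f : ℝ → ℝ := fun u => Real.exp (-lam * u) * W u with hf
  have hfm : Measurable f := ((measurable_id.const_mul (-lam)).exp).mul hWm
  have hfint : IntegrableOn f (Ioi 0) := hfi lam hlam
  have hfzero : ∀ u < (0:ℝ), f u = 0 := by
    intro u hu
    rw [hf]
    simp [hWneg u hu]
  set f0 : ℝ → ℝ := (Ioi (0:ℝ)).indicator f with hf0
  have hf0m : Measurable f0 := hfm.indicator measurableSet_Ioi
  have hf0int : Integrable f0 volume := by
    rw [hf0, integrable_indicator_iff measurableSet_Ioi]; exact hfint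
  have hff0 : f =ᵐ[volume] f0 := by
    have hsub : {u : ℝ | f u ≠ f0 u} ⊆ {0} := by
      intro u hu
      simp only [mem_setOf_eq] at hu
      by_contra hu0
      rcases lt_trichotomy u 0 with h' | h' | h'
      · exact hu (by rw [hfzero u h', hf0, indicator_of_notMem (by simp [h'.not_gt])])
      · exact hu0 h'
      · exact hu (by rw [hf0, indicator_of_mem (mem_Ioi.mpr h')])
    have : volume {u : ℝ | f u ≠ f0 u} = 0 := measure_mono_null hsub volume_singleton
    exact this
  -- the primitive G
  set G : ℝ → ℝ := fun t => ∫ s in (0:ℝ)..t, f0 s with hG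
  have hGc : Continuous G :=
    intervalIntegral.continuous_primitive (fun a b => hf0int.intervalIntegrable) 0
  have hGm : Measurable G := hGc.measurable
  have hGIoc : ∀ t, G t = ∫ s in Ioc 0 t, f s := by
    intro t
    show (∫ s in (0:ℝ)..t, f0 s) = _
    rcases le_or_gt 0 t with h' | h'
    · rw [intervalIntegral.integral_of_le h']
      apply setIntegral_congr_fun measurableSet_Ioc
      intro s hs
      rw [hf0, indicator_of_mem (mem_Ioi.mpr hs.1)]
    · rw [intervalIntegral.integral_of_ge h'.le, Ioc_eq_empty (not_lt.mpr h'.le)]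
      have h1 : ∫ s in Ioc t 0, f0 s = 0 := by
        apply setIntegral_eq_zero_of_forall_eq_zero
        intro x hx
        rw [hf0, indicator_of_notMem (by simp only [mem_Ioi, not_lt]; exact hx.2)]
      rw [h1]; simp
  have hGzero : ∀ t ≤ (0:ℝ), G t = 0 := by
    intro t ht
    rw [hGIoc, Ioc_eq_empty (by simpa using ht), setIntegral_empty]
  -- difference of primitives
  have hGd : ∀ a θ : ℝ, 0 ≤ θ → G a - G (a - θ) = ∫ s in Ioc (a - θ) a, f s := by
    intro a θ hθ
    have h1 : G a - G (a - θ) = ∫ s in (a - θ)..a, f0 s := by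
      rw [hG]
      exact intervalIntegral.integral_interval_sub_left hf0int.intervalIntegrable
        hf0int.intervalIntegrable
    rw [h1, intervalIntegral.integral_of_le (by linarith)]
    apply integral_congr_ae
    exact ae_restrict_of_ae hff0.symm
  set C0 : ℝ := ∫ s in Ioi (0:ℝ), |f s| with hC0
  have hC0nn : 0 ≤ C0 := setIntegral_nonneg measurableSet_Ioi (fun x _ => abs_nonneg _)
  have hGbd : ∀ t, |G t| ≤ C0 := by
    intro t
    rw [hGIoc]
    calc |∫ s in Ioc 0 t, f s| ≤ ∫ s in Ioc 0 t, |f s| := by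
          simpa [Real.norm_eq_abs] using
            norm_integral_le_integral_norm (μ := volume.restrict (Ioc 0 t)) f
      _ ≤ C0 := by
          rw [hC0]
          apply setIntegral_mono_set hfint.abs
          · filter_upwards with x using abs_nonneg _
          · exact HasSubset.Subset.eventuallyLE Ioc_subset_Ioi_self
  -- step B : tail integral
  have hB : (∫ x in Ioi b, Real.exp (-lam * x) * W x) = 1 / (ψ lam - q) - G b := by
    have hsplit : (∫ x in Ioi (0:ℝ), f x) = G b + ∫ x in Ioi b, f x := by
      rw [hGIoc, ← setIntegral_union (Ioc_disjoint_Ioi le_rfl) measurableSet_Ioi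
        (hfint.mono_set Ioc_subset_Ioi_self) (hfint.mono_set (Ioi_subset_Ioi hb)),
        Ioc_union_Ioi_eq_Ioi hb]
    have hlap : (∫ x in Ioi (0:ℝ), f x) = 1 / (ψ lam - q) := hWLap lam hlam
    have : (∫ x in Ioi b, f x) = 1 / (ψ lam - q) - G b := by
      rw [← hlap, hsplit]; ring
    exact this
  
  -- bound for W on (-∞, b]
  obtain ⟨MW, hMW⟩ := isCompact_Icc.exists_bound_of_continuousOn
    (hWc.mono (Icc_subset_Ici_self : Icc (0:ℝ) b ⊆ Ici 0))
  have hMW0 : 0 ≤ MW := le_trans (norm_nonneg (W 0)) (hMW 0 ⟨le_rfl, hb⟩)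
  have hWb : ∀ u : ℝ, u ≤ b → |W u| ≤ MW := by
    intro u hu
    rcases lt_or_ge u 0 with h' | h'
    · rw [hWneg u h']; simpa using hMW0
    · simpa [Real.norm_eq_abs] using hMW u ⟨h', hu⟩
  set F1 : ℝ × ℝ → ℝ :=
    fun p => if p.1 < p.2 then Real.exp (-lam * p.1) * W (p.1 - p.2 + b) else 0 with hF1
  have hF1m : Measurable F1 := by
    apply Measurable.ite (measurableSet_lt measurable_fst measurable_snd)
    · exact ((measurable_fst.const_mul (-lam)).exp).mul
        (hWm.comp ((measurable_fst.sub measurable_snd).add_const b))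
    · exact measurable_const
  have hinner : ∀ y ∈ Ioi (0:ℝ), (∫ θ in Ioi y, Real.exp (-lam * y) * W (y - θ + b) ∂ν)
      = ∫ θ, F1 (y, θ) ∂(ν.restrict (Ioi 0)) := by
    intro y hy
    have h1 : ν.restrict (Ioi y) = (ν.restrict (Ioi 0)).restrict (Ioi y) := by
      rw [Measure.restrict_restrict measurableSet_Ioi,
        inter_eq_self_of_subset_left (Ioi_subset_Ioi (le_of_lt hy))]
    have h2 : (∫ θ in Ioi y, Real.exp (-lam * y) * W (y - θ + b) ∂ν)
        = ∫ θ in Ioi y, Real.exp (-lam * y) * W (y - θ + b) ∂(ν.restrict (Ioi 0)) := by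
      rw [← h1]
    rw [h2, ← integral_indicator measurableSet_Ioi]
    apply integral_congr_ae
    filter_upwards with θ
    rw [hF1]
    simp only [Set.indicator_apply, mem_Ioi]
  -- pointwise bounds for the kernel
  have hptbd : ∀ θ : ℝ, ∀ y ∈ Ioi (0:ℝ),
      ‖F1 (y, θ)‖ ≤ (Ioo (0:ℝ) θ).indicator (fun _ => MW) y := by
    intro θ y hy
    rw [hF1]
    by_cases hyθ : y < θ
    · simp only [if_pos hyθ]
      have hmem : y ∈ Ioo (0:ℝ) θ := ⟨mem_Ioi.mp hy, hyθ⟩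
      rw [Set.indicator_of_mem hmem]
      rw [Real.norm_eq_abs, abs_mul, abs_of_pos (Real.exp_pos _)]
      have he : Real.exp (-lam * y) ≤ 1 := by
        rw [Real.exp_le_one_iff]
        nlinarith [mem_Ioi.mp hy]
      have hw := hWb (y - θ + b) (by linarith)
      nlinarith [abs_nonneg (W (y - θ + b)), Real.exp_pos (-lam * y)]
    · simp only [if_neg hyθ]
      simp only [norm_zero]
      exact indicator_nonneg (fun _ _ => hMW0) y
  have hptbd2 : ∀ θ : ℝ, ∀ y ∈ Ioi (0:ℝ),
      ‖F1 (y, θ)‖ ≤ MW * Real.exp (-lam * y) := by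
    intro θ y hy
    rw [hF1]
    by_cases hyθ : y < θ
    · simp only [if_pos hyθ]
      rw [Real.norm_eq_abs, abs_mul, abs_of_pos (Real.exp_pos _)]
      have hw := hWb (y - θ + b) (by linarith)
      nlinarith [Real.exp_pos (-lam * y)]
    · simp only [if_neg hyθ, norm_zero]
      positivity
  have hindint : ∀ θ : ℝ, Integrable ((Ioo (0:ℝ) θ).indicator (fun _ => MW))
      (volume.restrict (Ioi 0)) := by
    intro θ
    rw [integrable_indicator_iff measurableSet_Ioo]
    apply (integrableOn_const_iff (C := MW)).mpr
    right
    rw [Measure.restrict_apply measurableSet_Ioo]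
    exact lt_of_le_of_lt (measure_mono inter_subset_left) measure_Ioo_lt_top
  have hslice : ∀ θ : ℝ, Integrable (fun y => F1 (y, θ)) (volume.restrict (Ioi 0)) := by
    intro θ
    apply Integrable.mono' (hindint θ)
    · exact (hF1m.comp (measurable_id.prodMk measurable_const)).aestronglyMeasurable
    · filter_upwards [ae_restrict_mem measurableSet_Ioi] with y hy using hptbd θ y hy
  have hexpint : IntegrableOn (fun y : ℝ => Real.exp (-lam * y)) (Ioi 0) :=
    exp_neg_integrableOn_Ioi 0 hlam0
  have hF1prod : Integrable F1 ((volume.restrict (Ioi 0)).prod (ν.restrict (Ioi 0))) := by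
    rw [integrable_prod_iff' hF1m.aestronglyMeasurable]
    constructor
    · filter_upwards with θ using hslice θ
    · have hmeas : AEStronglyMeasurable
          (fun θ => ∫ y, ‖F1 (y, θ)‖ ∂(volume.restrict (Ioi 0))) (ν.restrict (Ioi 0)) :=
        (hF1m.norm.stronglyMeasurable.integral_prod_left').aestronglyMeasurable
      apply my_integrable_of_bound hνint hmeas (C := MW * (1 + 1/lam))
      intro θ hθ
      have hnn : 0 ≤ ∫ y, ‖F1 (y, θ)‖ ∂(volume.restrict (Ioi 0)) :=
        integral_nonneg (fun y => norm_nonneg _)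
      rw [abs_of_nonneg hnn]
      have hbd1 : (∫ y, ‖F1 (y, θ)‖ ∂(volume.restrict (Ioi 0))) ≤ MW * θ := by
        have := integral_mono_ae ((hslice θ).norm) (hindint θ)
          (by filter_upwards [ae_restrict_mem measurableSet_Ioi] with y hy using hptbd θ y hy)
        apply le_trans this
        rw [integral_indicator_const _ measurableSet_Ioo, smul_eq_mul, measureReal_def,
          Measure.restrict_apply measurableSet_Ioo,
          inter_eq_self_of_subset_left Ioo_subset_Ioi_self, Real.volume_Ioo,
          ENNReal.toReal_ofReal (by linarith [mem_Ioi.mp hθ] : (0:ℝ) ≤ θ - 0)]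
        nlinarith [mem_Ioi.mp hθ]
      have hbd2 : (∫ y, ‖F1 (y, θ)‖ ∂(volume.restrict (Ioi 0))) ≤ MW * (1/lam) := by
        have h3 : (∫ y in Ioi (0:ℝ), MW * Real.exp (-lam * y)) = MW * (1/lam) := by
          rw [integral_const_mul, my_integral_exp_Ioi hlam0]
          simp
        rw [← h3]
        apply integral_mono_ae ((hslice θ).norm) (hexpint.const_mul MW)
        filter_upwards [ae_restrict_mem measurableSet_Ioi] with y hy using hptbd2 θ y hy
      rcases le_total 1 θ with h1θ | h1θ
      · rw [min_eq_left h1θ]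
        have : MW * (1/lam) ≤ MW * (1 + 1/lam) * 1 := by
          have : 0 < 1/lam := by positivity
          nlinarith
        linarith [hbd2]
      · rw [min_eq_right h1θ]
        have hθ0 : 0 < θ := mem_Ioi.mp hθ
        have : MW * θ ≤ MW * (1 + 1/lam) * θ := by
          have h4 : 0 < 1/lam := by positivity
          nlinarith
        linarith [hbd1]
  have hswap := integral_integral_swap (f := fun y θ => F1 (y, θ))
    (μ := volume.restrict (Ioi 0)) (ν := ν.restrict (Ioi 0)) hF1prod
  have hYint : ∀ θ ∈ Ioi (0:ℝ), (∫ y, F1 (y, θ) ∂(volume.restrict (Ioi 0)))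
      = Real.exp (lam * b) * (Real.exp (-lam * θ) * (G b - G (b - θ))) := by
    intro θ hθ
    have hθ0 : 0 < θ := mem_Ioi.mp hθ
    have h1 : ∀ y, F1 (y, θ)
        = (Iio θ).indicator (fun y => Real.exp (-lam * y) * W (y - θ + b)) y := by
      intro y; rw [hF1]; simp only [Set.indicator_apply, mem_Iio]
    simp_rw [h1]
    rw [integral_indicator measurableSet_Iio, Measure.restrict_restrict measurableSet_Iio,
      show Iio θ ∩ Ioi 0 = Ioo 0 θ from by rw [inter_comm, Ioi_inter_Iio],
      ← integral_Ioc_eq_integral_Ioo, ← intervalIntegral.integral_of_le (le_of_lt hθ0)]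
    have h2 : ∀ y : ℝ, Real.exp (-lam * y) * W (y - θ + b)
        = Real.exp (lam * (b - θ)) * f (y + (b - θ)) := by
      intro y
      rw [hf]
      simp only []
      rw [← mul_assoc, ← Real.exp_add,
        show y - θ + b = y + (b - θ) from by ring,
        show lam * (b - θ) + -lam * (y + (b - θ)) = -lam * y from by ring]
    simp_rw [h2]
    rw [intervalIntegral.integral_const_mul,
      intervalIntegral.integral_comp_add_right (fun u => f u) (b - θ),
      show (0:ℝ) + (b - θ) = b - θ from by ring,
      show θ + (b - θ) = b from by ring,
      intervalIntegral.integral_of_le (by linarith : b - θ ≤ b)]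
    have h3 : (∫ s in Ioc (b - θ) b, f s) = G b - G (b - θ) := (hGd b θ (le_of_lt hθ0)).symm
    rw [h3, show lam * (b - θ) = lam * b + -lam * θ from by ring, Real.exp_add]
    ring
  have hA : (∫ y in Ioi (0:ℝ), ∫ θ in Ioi y, Real.exp (-lam * y) * W (y - θ + b) ∂ν)
      = Real.exp (lam * b)
        * ∫ θ in Ioi (0:ℝ), Real.exp (-lam * θ) * (G b - G (b - θ)) ∂ν := by
    calc (∫ y in Ioi (0:ℝ), ∫ θ in Ioi y, Real.exp (-lam * y) * W (y - θ + b) ∂ν)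
        = ∫ y in Ioi (0:ℝ), ∫ θ, F1 (y, θ) ∂(ν.restrict (Ioi 0)) :=
          setIntegral_congr_fun measurableSet_Ioi (fun y hy => hinner y hy)
      _ = ∫ θ, ∫ y, F1 (y, θ) ∂(volume.restrict (Ioi 0)) ∂(ν.restrict (Ioi 0)) := hswap
      _ = ∫ θ in Ioi (0:ℝ),
            Real.exp (lam * b) * (Real.exp (-lam * θ) * (G b - G (b - θ))) ∂ν :=
          setIntegral_congr_fun measurableSet_Ioi (fun θ hθ => hYint θ hθ)
      _ = Real.exp (lam * b)
            * ∫ θ in Ioi (0:ℝ), Real.exp (-lam * θ) * (G b - G (b - θ)) ∂ν :=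
          integral_const_mul _ _
  
  -- primitive of |f|
  set A : ℝ → ℝ := fun t => ∫ s in (0:ℝ)..t, |f0 s| with hAdef
  have hfam : Measurable fun s => |f s| := hfm.abs
  have hfa0int : Integrable (fun s => |f0 s|) volume := hf0int.abs
  have hffa0 : (fun s => |f s|) =ᵐ[volume] (fun s => |f0 s|) := by
    filter_upwards [hff0] with s hs
    rw [hs]
  have hAIoc : ∀ t, A t = ∫ s in Ioc 0 t, |f s| := by
    intro t
    show (∫ s in (0:ℝ)..t, |f0 s|) = _
    rcases le_or_gt 0 t with h' | h'
    · rw [intervalIntegral.integral_of_le h']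
      apply setIntegral_congr_fun measurableSet_Ioc
      intro s hs
      show |f0 s| = |f s|
      rw [hf0, Set.indicator_of_mem (mem_Ioi.mpr hs.1)]
    · rw [intervalIntegral.integral_of_ge h'.le, Ioc_eq_empty (not_lt.mpr h'.le)]
      have h1 : ∫ s in Ioc t 0, |f0 s| = 0 := by
        apply setIntegral_eq_zero_of_forall_eq_zero
        intro x hx
        show |f0 x| = 0
        rw [hf0, Set.indicator_of_notMem (by simp only [mem_Ioi, not_lt]; exact hx.2)]
        simp
      rw [h1]; simp
  have hAzero : ∀ t ≤ (0:ℝ), A t = 0 := by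
    intro t ht
    rw [hAIoc, Ioc_eq_empty (by simpa using ht), setIntegral_empty]
  have hAd : ∀ a θ : ℝ, 0 ≤ θ → A a - A (a - θ) = ∫ s in Ioc (a - θ) a, |f s| := by
    intro a θ hθ
    have h1 : A a - A (a - θ) = ∫ s in (a - θ)..a, |f0 s| := by
      rw [hAdef]
      exact intervalIntegral.integral_interval_sub_left hfa0int.intervalIntegrable
        hfa0int.intervalIntegrable
    rw [h1, intervalIntegral.integral_of_le (by linarith)]
    apply integral_congr_ae
    exact ae_restrict_of_ae hffa0.symm
  have hAbd : ∀ t, |A t| ≤ C0 := by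
    intro t
    rw [hAIoc, hC0,
      abs_of_nonneg (setIntegral_nonneg measurableSet_Ioc fun x _ => abs_nonneg _)]
    apply setIntegral_mono_set hfint.abs
    · filter_upwards with x using abs_nonneg _
    · exact HasSubset.Subset.eventuallyLE Ioc_subset_Ioi_self
  have hAm : Measurable A := by
    have : Continuous A :=
      intervalIntegral.continuous_primitive (fun a b => hfa0int.intervalIntegrable) 0
    exact this.measurable
  have hGAd : ∀ a θ : ℝ, 0 ≤ θ → |G a - G (a - θ)| ≤ A a - A (a - θ) := by
    intro a θ hθ
    rw [hGd a θ hθ, hAd a θ hθ]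
    simpa [Real.norm_eq_abs] using
      norm_integral_le_integral_norm (μ := volume.restrict (Ioc (a - θ) a)) f
  -- continuity of K
  set K : ℝ → ℝ := fun a => ∫ θ in Ioi (0:ℝ), Real.exp (-lam * θ) * (G a - G (a - θ)) ∂ν with hK
  have hfc : ContinuousOn f (Ici 0) := by
    rw [hf]
    exact ((Real.continuous_exp.comp (continuous_const.mul continuous_id)).continuousOn).mul hWc
  have hKc : Continuous K := by
    rw [continuous_iff_continuousAt]
    intro a0
    obtain ⟨M, hM⟩ := isCompact_Icc.exists_bound_of_continuousOn
      (hfc.mono (Icc_subset_Ici_self : Icc (0:ℝ) (|a0| + 2) ⊆ Ici 0))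
    have hM0 : 0 ≤ M := le_trans (norm_nonneg (f 0)) (hM 0 ⟨le_rfl, by positivity⟩)
    have hfbd : ∀ u : ℝ, u ≤ |a0| + 2 → |f u| ≤ M := by
      intro u hu
      rcases lt_or_ge u 0 with h' | h'
      · rw [hfzero u h']; simpa using hM0
      · simpa [Real.norm_eq_abs] using hM u ⟨h', hu⟩
    have hDbd : ∀ a ∈ Metric.ball a0 1, ∀ θ ∈ Ioi (0:ℝ),
        |Real.exp (-lam * θ) * (G a - G (a - θ))| ≤ (2*C0 + M) * min 1 θ := by
      intro a ha θ hθ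
      have hθ0 : (0:ℝ) < θ := mem_Ioi.mp hθ
      have he1 : Real.exp (-lam * θ) ≤ 1 := by
        rw [Real.exp_le_one_iff]; nlinarith
      have habs : |Real.exp (-lam * θ) * (G a - G (a - θ))| ≤ |G a - G (a - θ)| := by
        rw [abs_mul, abs_of_pos (Real.exp_pos _)]
        nlinarith [abs_nonneg (G a - G (a - θ)), Real.exp_pos (-lam * θ)]
      rcases le_total 1 θ with h1 | h1
      · rw [min_eq_left h1]
        have h2 : |G a - G (a - θ)| ≤ 2*C0 := by
          calc |G a - G (a - θ)| ≤ |G a| + |G (a - θ)| := abs_sub _ _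
            _ ≤ 2*C0 := by linarith [hGbd a, hGbd (a - θ)]
        nlinarith
      · rw [min_eq_right h1]
        have haa : a ≤ |a0| + 2 := by
          have := Metric.mem_ball.mp ha
          rw [Real.dist_eq] at this
          have h3 := abs_lt.mp this
          have h4 := le_abs_self a0
          linarith [h3.2]
        have hvol : volume (Ioc (a - θ) a) < ⊤ := measure_Ioc_lt_top
        have h5 : |G a - G (a - θ)| ≤ M * θ := by
          rw [hGd a θ hθ0.le]
          have h6 := norm_setIntegral_le_of_norm_le_const (C := M) hvol
            (fun x hx => by
              rw [Real.norm_eq_abs]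
              exact hfbd x (by linarith [hx.2]))
          have h7 := h6
          rw [Real.norm_eq_abs] at h7
          apply le_trans h7
          rw [measureReal_def, Real.volume_Ioc, ENNReal.toReal_ofReal (by linarith : (0:ℝ) ≤ a - (a - θ))]
          nlinarith
        nlinarith
    have := continuousAt_of_dominated
      (F := fun a θ => Real.exp (-lam * θ) * (G a - G (a - θ)))
      (μ := ν.restrict (Ioi 0)) (x₀ := a0) (bound := fun θ => (2*C0 + M) * min 1 θ)
      ?_ ?_ ?_ ?_
    · exact this
    · filter_upwards with a
      exact ((Real.continuous_exp.comp (continuous_const.mul continuous_id)).mul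
        (continuous_const.sub (hGc.comp (continuous_const.sub continuous_id)))).aestronglyMeasurable
    · filter_upwards [Metric.ball_mem_nhds a0 one_pos] with a ha
      filter_upwards [ae_restrict_mem measurableSet_Ioi] with θ hθ
      rw [Real.norm_eq_abs]
      exact hDbd a ha θ hθ
    · exact (my_min_integrable hνint).const_mul (2*C0 + M)
    · filter_upwards with θ
      exact (continuous_const.mul
        (hGc.sub (hGc.comp (continuous_id.sub continuous_const)))).continuousAt
  
  have hAnn : ∀ t, 0 ≤ A t := by
    intro t
    rw [hAIoc]
    exact setIntegral_nonneg measurableSet_Ioc fun x _ => abs_nonneg _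
  set R : ℝ → ℝ := fun a => c * Real.exp (-lam * a) * W a - 1 + (ψ lam - q) * G a with hR
  have hRm : Measurable R := by
    rw [hR]
    exact (((measurable_const.mul ((measurable_id.const_mul (-lam)).exp)).mul hWm).sub
      measurable_const).add (measurable_const.mul hGm)
  have hRcont : ContinuousOn R (Ici 0) := by
    rw [hR]
    apply ContinuousOn.add
    · apply ContinuousOn.sub
      · exact (continuousOn_const.mul
          ((Real.continuous_exp.comp (continuous_const.mul continuous_id)).continuousOn)).mul hWc
      · exact continuousOn_const
    · exact continuousOn_const.mul hGc.continuousOn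
  have hIexp : ∀ t : ℝ, 0 ≤ t → Integrable (fun θ => 1 - Real.exp (-t * θ))
      (ν.restrict (Ioi 0)) := by
    intro t ht
    have hcont' : Continuous fun θ : ℝ => 1 - Real.exp (-t * θ) := by fun_prop
    apply my_integrable_of_bound hνint (g := fun θ => 1 - Real.exp (-t * θ))
      hcont'.aestronglyMeasurable (C := max 1 t)
    intro θ hθ
    show |1 - Real.exp (-t * θ)| ≤ max 1 t * min 1 θ
    have hθ0 : 0 < θ := mem_Ioi.mp hθ
    have h1 : Real.exp (-t * θ) ≤ 1 := by
      rw [Real.exp_le_one_iff]; nlinarith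
    have h2 : 1 - Real.exp (-t * θ) ≤ t * θ := by
      nlinarith [Real.add_one_le_exp (-t * θ)]
    rw [abs_of_nonneg (by linarith : (0:ℝ) ≤ 1 - Real.exp (-t * θ))]
    rcases le_total θ 1 with h3 | h3
    · rw [min_eq_right h3]
      have : (1:ℝ) ≤ max 1 t ∨ t ≤ max 1 t := Or.inr (le_max_right 1 t)
      nlinarith [le_max_right (1:ℝ) t, le_max_left (1:ℝ) t]
    · rw [min_eq_left h3]
      nlinarith [le_max_left (1:ℝ) t, Real.exp_pos (-t * θ)]
  -- key transform identity for every β > 0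
  have hKEY : ∀ β : ℝ, 0 < β →
      IntegrableOn (fun s => Real.exp (-β * s) * (K s - R s)) (Ioi 0) ∧
      (∫ s in Ioi 0, Real.exp (-β * s) * (K s - R s)) = 0 := by
    intro β hβ
    have hβl : Φq < β + lam := by linarith
    have hE2 : 0 < ψ (β + lam) - q := sub_pos.mpr (hΦmax _ hβl)
    have hptf : ∀ s : ℝ, Real.exp (-(β + lam) * s) * W s
        = Real.exp (-β * s) * f s := by
      intro s
      rw [hf]
      show Real.exp (-(β + lam) * s) * W s = Real.exp (-β * s) * (Real.exp (-lam * s) * W s)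
      rw [← mul_assoc, ← Real.exp_add, show -β * s + -lam * s = -(β + lam) * s from by ring]
    have hcomb : (∫ s in Ioi (0:ℝ), Real.exp (-β * s) * f s) = 1 / (ψ (β + lam) - q) := by
      rw [← hWLap (β + lam) hβl]
      exact setIntegral_congr_fun measurableSet_Ioi (fun s _ => (hptf s).symm)
    have hintf2 : IntegrableOn (fun s => Real.exp (-β * s) * f s) (Ioi 0) := by
      apply (hfi (β + lam) hβl).congr
      filter_upwards with s using hptf s
    have hTval : (∫ a in Ioi (0:ℝ), Real.exp (-β * a) * G a)
        = (1/β) * (1 / (ψ (β + lam) - q)) := by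
      have h1 : (∫ a in Ioi (0:ℝ), Real.exp (-β * a) * G a)
          = ∫ a in Ioi (0:ℝ), Real.exp (-β * a) * (∫ s in Ioc 0 a, f s) := by
        apply setIntegral_congr_fun measurableSet_Ioi
        intro a _
        show Real.exp (-β * a) * G a = Real.exp (-β * a) * ∫ s in Ioc 0 a, f s
        rw [hGIoc a]
      rw [h1, my_laplace_primitive hfm hfint hβ, hcomb]
    have hexpβ : IntegrableOn (fun a : ℝ => Real.exp (-β * a)) (Ioi 0) :=
      exp_neg_integrableOn_Ioi 0 hβ
    have hTint : Integrable (fun a => Real.exp (-β * a) * G a) (volume.restrict (Ioi 0)) := by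
      apply Integrable.mono' (hexpβ.const_mul C0)
      · exact (((measurable_id.const_mul (-β)).exp).mul hGm).aestronglyMeasurable
      · filter_upwards with a
        rw [Real.norm_eq_abs, abs_mul, abs_of_pos (Real.exp_pos _)]
        calc Real.exp (-β * a) * |G a| ≤ Real.exp (-β * a) * C0 :=
              mul_le_mul_of_nonneg_left (hGbd a) (Real.exp_pos _).le
          _ = C0 * Real.exp (-β * a) := mul_comm _ _
    have hTshift : ∀ θ : ℝ, Integrable (fun a => Real.exp (-β * a) * G (a - θ))
        (volume.restrict (Ioi 0)) := by
      intro θ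
      apply Integrable.mono' (hexpβ.const_mul C0)
      · exact (((measurable_id.const_mul (-β)).exp).mul
          ((hGc.comp (continuous_id.sub continuous_const)).measurable)).aestronglyMeasurable
      · filter_upwards with a
        rw [Real.norm_eq_abs, abs_mul, abs_of_pos (Real.exp_pos _)]
        calc Real.exp (-β * a) * |G (a - θ)| ≤ Real.exp (-β * a) * C0 :=
              mul_le_mul_of_nonneg_left (hGbd (a - θ)) (Real.exp_pos _).le
          _ = C0 * Real.exp (-β * a) := mul_comm _ _
    have hTAint : Integrable (fun a => Real.exp (-β * a) * A a) (volume.restrict (Ioi 0)) := by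
      apply Integrable.mono' (hexpβ.const_mul C0)
      · exact (((measurable_id.const_mul (-β)).exp).mul hAm).aestronglyMeasurable
      · filter_upwards with a
        rw [Real.norm_eq_abs, abs_mul, abs_of_pos (Real.exp_pos _)]
        calc Real.exp (-β * a) * |A a| ≤ Real.exp (-β * a) * C0 :=
              mul_le_mul_of_nonneg_left (hAbd a) (Real.exp_pos _).le
          _ = C0 * Real.exp (-β * a) := mul_comm _ _
    have hTAshift : ∀ θ : ℝ, Integrable (fun a => Real.exp (-β * a) * A (a - θ))
        (volume.restrict (Ioi 0)) := by
      intro θ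
      apply Integrable.mono' (hexpβ.const_mul C0)
      · exact (((measurable_id.const_mul (-β)).exp).mul
          (hAm.comp ((continuous_id.sub (continuous_const : Continuous fun _ : ℝ => θ)).measurable))).aestronglyMeasurable
      · filter_upwards with a
        rw [Real.norm_eq_abs, abs_mul, abs_of_pos (Real.exp_pos _)]
        calc Real.exp (-β * a) * |A (a - θ)| ≤ Real.exp (-β * a) * C0 :=
              mul_le_mul_of_nonneg_left (hAbd (a - θ)) (Real.exp_pos _).le
          _ = C0 * Real.exp (-β * a) := mul_comm _ _
    have hTA0 : 0 ≤ ∫ a in Ioi (0:ℝ), Real.exp (-β * a) * A a :=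
      setIntegral_nonneg measurableSet_Ioi fun a _ =>
        mul_nonneg (Real.exp_pos _).le (hAnn a)
    set F2 : ℝ × ℝ → ℝ :=
      fun p => Real.exp (-β * p.1) * (Real.exp (-lam * p.2) * (G p.1 - G (p.1 - p.2))) with hF2
    have hF2c : Continuous F2 := by
      rw [hF2]
      exact (Real.continuous_exp.comp (continuous_const.mul continuous_fst)).mul
        ((Real.continuous_exp.comp (continuous_const.mul continuous_snd)).mul
          ((hGc.comp continuous_fst).sub (hGc.comp (continuous_fst.sub continuous_snd))))
    have hslice2 : ∀ θ : ℝ, Integrable (fun a => F2 (a, θ)) (volume.restrict (Ioi 0)) := by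
      intro θ
      apply (((hTint.sub (hTshift θ)).const_mul (Real.exp (-lam * θ))).congr)
      filter_upwards with a
      simp only [hF2, Pi.sub_apply]
      ring
    have hF2prod : Integrable F2 ((volume.restrict (Ioi 0)).prod (ν.restrict (Ioi 0))) := by
      rw [integrable_prod_iff' hF2c.aestronglyMeasurable]
      constructor
      · filter_upwards with θ using hslice2 θ
      · have hmeas2 : AEStronglyMeasurable
            (fun θ => ∫ a, ‖F2 (a, θ)‖ ∂(volume.restrict (Ioi 0))) (ν.restrict (Ioi 0)) :=
          (hF2c.measurable.norm.stronglyMeasurable.integral_prod_left').aestronglyMeasurable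
        apply my_integrable_of_bound hνint hmeas2
          (C := (max 1 β) * ∫ a in Ioi (0:ℝ), Real.exp (-β * a) * A a)
        intro θ hθ
        have hθ0 : 0 < θ := mem_Ioi.mp hθ
        have hnn2 : 0 ≤ ∫ a, ‖F2 (a, θ)‖ ∂(volume.restrict (Ioi 0)) :=
          integral_nonneg fun a => norm_nonneg _
        rw [abs_of_nonneg hnn2]
        have hRHSint : Integrable (fun a => Real.exp (-lam * θ) *
            (Real.exp (-β * a) * A a - Real.exp (-β * a) * A (a - θ)))
            (volume.restrict (Ioi 0)) :=
          (hTAint.sub (hTAshift θ)).const_mul _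
        have hb1 : (∫ a, ‖F2 (a, θ)‖ ∂(volume.restrict (Ioi 0)))
            ≤ ∫ a in Ioi (0:ℝ), Real.exp (-lam * θ) *
                (Real.exp (-β * a) * A a - Real.exp (-β * a) * A (a - θ)) := by
          apply integral_mono_ae ((hslice2 θ).norm) hRHSint
          filter_upwards with a
          have hGA := hGAd a θ hθ0.le
          have he : ‖F2 (a, θ)‖
              = Real.exp (-β * a) * (Real.exp (-lam * θ) * |G a - G (a - θ)|) := by
            simp only [hF2]
            rw [Real.norm_eq_abs, abs_mul, abs_mul, abs_of_pos (Real.exp_pos _),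
              abs_of_pos (Real.exp_pos _)]
          rw [he]
          have h2 : Real.exp (-β * a) * (Real.exp (-lam * θ) * |G a - G (a - θ)|)
              ≤ Real.exp (-β * a) * (Real.exp (-lam * θ) * (A a - A (a - θ))) := by
            apply mul_le_mul_of_nonneg_left _ (Real.exp_pos _).le
            exact mul_le_mul_of_nonneg_left hGA (Real.exp_pos _).le
          apply h2.trans
          apply le_of_eq
          ring
        have hb2 : (∫ a in Ioi (0:ℝ), Real.exp (-lam * θ) *
              (Real.exp (-β * a) * A a - Real.exp (-β * a) * A (a - θ)))
            = Real.exp (-lam * θ) * ((1 - Real.exp (-β * θ)) *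
                ∫ a in Ioi (0:ℝ), Real.exp (-β * a) * A a) := by
          rw [integral_const_mul, integral_sub hTAint (hTAshift θ), my_shift hAzero hθ0.le]
          ring
        have he3 : Real.exp (-lam * θ) ≤ 1 := by
          rw [Real.exp_le_one_iff]; nlinarith
        have he4 : 0 ≤ 1 - Real.exp (-β * θ) := by
          have : Real.exp (-β * θ) ≤ 1 := by rw [Real.exp_le_one_iff]; nlinarith
          linarith
        have he5 : 1 - Real.exp (-β * θ) ≤ β * θ := by
          nlinarith [Real.add_one_le_exp (-β * θ)]
        have he6 : 1 - Real.exp (-β * θ) ≤ 1 := by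
          nlinarith [Real.exp_pos (-β * θ)]
        apply (hb1.trans (le_of_eq hb2)).trans
        set TA := ∫ a in Ioi (0:ℝ), Real.exp (-β * a) * A a
        have hc1 : Real.exp (-lam * θ) * ((1 - Real.exp (-β * θ)) * TA)
            ≤ (1 - Real.exp (-β * θ)) * TA := by
          have := mul_le_mul_of_nonneg_right he3 (mul_nonneg he4 hTA0)
          linarith
        rcases le_total θ 1 with h7 | h7
        · rw [min_eq_right h7]
          have h9 : β ≤ max 1 β := le_max_right 1 β
          calc Real.exp (-lam * θ) * ((1 - Real.exp (-β * θ)) * TA)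
              ≤ (1 - Real.exp (-β * θ)) * TA := hc1
            _ ≤ (β * θ) * TA := mul_le_mul_of_nonneg_right he5 hTA0
            _ ≤ (max 1 β * θ) * TA :=
                mul_le_mul_of_nonneg_right
                  (mul_le_mul_of_nonneg_right h9 hθ0.le) hTA0
            _ = max 1 β * TA * θ := by ring
        · rw [min_eq_left h7]
          have h9 : (1:ℝ) ≤ max 1 β := le_max_left 1 β
          calc Real.exp (-lam * θ) * ((1 - Real.exp (-β * θ)) * TA)
              ≤ (1 - Real.exp (-β * θ)) * TA := hc1
            _ ≤ 1 * TA := mul_le_mul_of_nonneg_right he6 hTA0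
            _ ≤ max 1 β * TA := by nlinarith
            _ = max 1 β * TA * 1 := by ring
    have hswap2 := integral_integral_swap (f := fun a θ => F2 (a, θ))
      (μ := volume.restrict (Ioi 0)) (ν := ν.restrict (Ioi 0)) hF2prod
    have hinner2 : ∀ a : ℝ, (∫ θ, F2 (a, θ) ∂(ν.restrict (Ioi 0)))
        = Real.exp (-β * a) * K a := by
      intro a
      rw [hK, ← integral_const_mul]
    have hIK : Integrable (fun a => Real.exp (-β * a) * K a) (volume.restrict (Ioi 0)) := by
      apply (hF2prod.integral_prod_left).congr
      filter_upwards with a using hinner2 a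
    have hstep2 : ∀ θ ∈ Ioi (0:ℝ), (∫ a, F2 (a, θ) ∂(volume.restrict (Ioi 0)))
        = ((1 - Real.exp (-(β + lam) * θ)) - (1 - Real.exp (-lam * θ)))
            * ((1/β) * (1 / (ψ (β + lam) - q))) := by
      intro θ hθ
      have hθ0 : 0 < θ := mem_Ioi.mp hθ
      have h1 : (∫ a, F2 (a, θ) ∂(volume.restrict (Ioi 0)))
          = Real.exp (-lam * θ) * ((∫ a in Ioi (0:ℝ), Real.exp (-β * a) * G a)
              - ∫ a in Ioi (0:ℝ), Real.exp (-β * a) * G (a - θ)) := by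
        rw [← integral_sub hTint (hTshift θ), ← integral_const_mul]
        apply integral_congr_ae
        filter_upwards with a
        simp only [hF2]
        ring
      rw [h1, my_shift hGzero hθ0.le, hTval,
        show -(β + lam) * θ = -lam * θ + -β * θ from by ring, Real.exp_add]
      ring
    have hTK : (∫ a in Ioi (0:ℝ), Real.exp (-β * a) * K a)
        = ((∫ θ in Ioi (0:ℝ), (1 - Real.exp (-(β + lam) * θ)) ∂ν)
            - ∫ θ in Ioi (0:ℝ), (1 - Real.exp (-lam * θ)) ∂ν)
            * ((1/β) * (1 / (ψ (β + lam) - q))) := by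
      calc (∫ a in Ioi (0:ℝ), Real.exp (-β * a) * K a)
          = ∫ a, (∫ θ, F2 (a, θ) ∂(ν.restrict (Ioi 0))) ∂(volume.restrict (Ioi 0)) := by
            apply integral_congr_ae
            filter_upwards with a using (hinner2 a).symm
        _ = ∫ θ, (∫ a, F2 (a, θ) ∂(volume.restrict (Ioi 0))) ∂(ν.restrict (Ioi 0)) := hswap2
        _ = ∫ θ in Ioi (0:ℝ), ((1 - Real.exp (-(β + lam) * θ)) - (1 - Real.exp (-lam * θ)))
              * ((1/β) * (1 / (ψ (β + lam) - q))) ∂ν :=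
            setIntegral_congr_fun measurableSet_Ioi (fun θ hθ => hstep2 θ hθ)
        _ = _ := by
            rw [integral_mul_const,
              integral_sub (hIexp (β + lam) (by linarith)) (hIexp lam hlam0.le)]
    have hptR : ∀ a : ℝ, Real.exp (-β * a) * R a
        = c * (Real.exp (-β * a) * f a) - Real.exp (-β * a)
          + (ψ lam - q) * (Real.exp (-β * a) * G a) := by
      intro a
      rw [hR, hf]
      show Real.exp (-β * a) * (c * Real.exp (-lam * a) * W a - 1 + (ψ lam - q) * G a)
          = c * (Real.exp (-β * a) * (Real.exp (-lam * a) * W a)) - Real.exp (-β * a)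
            + (ψ lam - q) * (Real.exp (-β * a) * G a)
      ring
    have hexpval : (∫ a in Ioi (0:ℝ), Real.exp (-β * a)) = 1/β := by
      have := my_integral_exp_Ioi hβ 0
      simpa using this
    have hIR : Integrable (fun a => Real.exp (-β * a) * R a) (volume.restrict (Ioi 0)) := by
      apply (((hintf2.const_mul c).sub hexpβ).add (hTint.const_mul (ψ lam - q))).congr
      filter_upwards with a using (hptR a).symm
    have hTR : (∫ a in Ioi (0:ℝ), Real.exp (-β * a) * R a)
        = c * (1 / (ψ (β + lam) - q)) - 1/β
          + (ψ lam - q) * ((1/β) * (1 / (ψ (β + lam) - q))) := by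
      have hi1 : Integrable
          (fun a : ℝ => c * (Real.exp (-β * a) * f a) - Real.exp (-β * a))
          (volume.restrict (Ioi 0)) := (hintf2.const_mul c).sub hexpβ
      rw [setIntegral_congr_fun measurableSet_Ioi (fun a _ => hptR a),
        integral_add hi1 (hTint.const_mul (ψ lam - q)),
        integral_sub (hintf2.const_mul c) hexpβ,
        integral_const_mul, integral_const_mul, hcomb, hTval, hexpval]
    constructor
    · apply ((hIK.sub hIR).congr)
      filter_upwards with s
      simp only [Pi.sub_apply]
      ring
    · have hsplit2 : (∫ s in Ioi (0:ℝ), Real.exp (-β * s) * (K s - R s))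
          = (∫ a in Ioi (0:ℝ), Real.exp (-β * a) * K a)
            - ∫ a in Ioi (0:ℝ), Real.exp (-β * a) * R a := by
        rw [← integral_sub hIK hIR]
        apply integral_congr_ae
        filter_upwards with s
        ring
      rw [hsplit2, hTK, hTR]
      have hA1 : (∫ θ in Ioi (0:ℝ), (1 - Real.exp (-lam * θ)) ∂ν) = c * lam - ψ lam := by
        rw [hψ lam hlam0.le]; ring
      have hA2 : (∫ θ in Ioi (0:ℝ), (1 - Real.exp (-(β + lam) * θ)) ∂ν)
          = c * (β + lam) - ψ (β + lam) := by
        rw [hψ (β + lam) (by linarith)]; ring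
      rw [hA1, hA2]
      field_simp
      ring
  -- uniqueness
  have hdiff := my_laplace_unique (h := fun s => K s - R s)
    (hKc.measurable.sub hRm)
    (hKc.continuousOn.sub hRcont)
    (le_refl (0:ℝ))
    (fun β hβ => (hKEY β hβ).1)
    (fun β hβ => (hKEY β hβ).2)
    b hb
  have h0 : K b - R b = 0 := hdiff
  have hKbeq : (∫ θ in Ioi (0:ℝ), Real.exp (-lam * θ) * (G b - G (b - θ)) ∂ν)
      = c * Real.exp (-lam * b) * W b - 1 + (ψ lam - q) * G b := by
    show K b = c * Real.exp (-lam * b) * W b - 1 + (ψ lam - q) * G b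
    have h1 : K b = R b := by linarith
    rw [h1, hR]
  rw [hA, hB, hKbeq]
  rw [show -lam * b = -(lam * b) from by ring, Real.exp_neg]
  field_simp
  ring
end

section
/- Let $X$ be a Cramér–Lundberg process with premium rate $c > 0$ and hyper-exponential claims: Laplace exponent $\psi(\theta) = c\theta - \lambda + \lambda\sum_{k=1}^n A_k \alpha_k/(\alpha_k + \theta)$ with $\lambda, A_k, \alpha_k > 0$, $\sum_k A_k = 1$. Fix $q > 0$ and suppose $\psi(\theta) - q$ has $n+1$ distinct real roots $\theta_0 = \Phi(q) > 0 > \theta_1 > \cdots > \theta_n$ (none equal to any $-\alpha_k$). Then the $q$-scale function is $W^{(q)}(x) = \sum_{i=0}^n D_i e^{\theta_i x}$ for $x \geq 0$, where $D_i = 1/\psi'(\theta_i)$. -/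
open MeasureTheory Set

section Helpers
open Polynomial Finset

lemma exp_int {b : ℝ} (hb : 0 < b) : ∫ x in Set.Ioi (0:ℝ), Real.exp (-b * x) = 1 / b := by
  have h : ∫ x in Set.Ioi (0:ℝ), Real.exp (-b * x) = 0 - (-Real.exp (-b * 0) / b) := by
    refine integral_Ioi_of_hasDerivAt_of_tendsto' (f := fun x => -Real.exp (-b*x)/b)
      (fun x _ => ?_) (exp_neg_integrableOn_Ioi 0 hb) ?_
    · have : HasDerivAt (fun x => Real.exp (-b * x)) (-b * Real.exp (-b * x)) x := by
        simpa [mul_comm] using ((hasDerivAt_id x).const_mul (-b)).exp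
      convert (this.neg.div_const b) using 1
      · rfl
      · rfl
      · rw [eq_div_iff hb.ne']; ring
    · have h2 : Filter.Tendsto (fun x : ℝ => -b * x) Filter.atTop Filter.atBot :=
        Filter.tendsto_id.const_mul_atTop_of_neg (by linarith)
      have : Filter.Tendsto (fun x : ℝ => Real.exp (-b * x)) Filter.atTop (nhds 0) :=
        Real.tendsto_exp_atBot.comp h2
      simpa using (this.neg.div_const b)
  rw [h]; simp; ring

lemma poly_id (n : ℕ) (c lam q : ℝ) (hc : c ≠ 0) (α : Fin n → ℝ) (B : Fin n → ℝ)
    (θ : Fin (n+1) → ℝ) (hinj : Function.Injective θ)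
    (hval : ∀ i, (c * θ i - lam - q) * (∏ k, (α k + θ i))
      + lam * ∑ k, B k * ∏ j ∈ univ.erase k, (α j + θ i) = 0) :
    ∀ x : ℝ, (c * x - lam - q) * (∏ k, (α k + x))
      + lam * ∑ k, B k * ∏ j ∈ univ.erase k, (α j + x) = c * ∏ i, (x - θ i) := by
  classical
  set P1 : ℝ[X] := (C c * X + C (-(lam+q))) * ∏ k, (X + C (α k)) with hP1
  set P2 : ℝ[X] := C lam * ∑ k, C (B k) * ∏ j ∈ univ.erase k, (X + C (α j)) with hP2
  set Pθ : ℝ[X] := C c * ∏ i, (X - C (θ i)) with hPθ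
  have evalP1 : ∀ x : ℝ, P1.eval x = (c * x - lam - q) * (∏ k, (α k + x)) := by
    intro x
    simp only [hP1, eval_mul, eval_add, eval_prod, eval_X, eval_C]
    rw [show (∏ k, (x + α k)) = ∏ k, (α k + x) from Finset.prod_congr rfl fun k _ => add_comm _ _]
    ring
  have evalP2 : ∀ x : ℝ, P2.eval x = lam * ∑ k, B k * ∏ j ∈ univ.erase k, (α j + x) := by
    intro x
    simp only [hP2, eval_mul, eval_finset_sum, eval_add, eval_prod, eval_X, eval_C]
    congr 1
    refine Finset.sum_congr rfl fun k _ => ?_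
    congr 1
    exact Finset.prod_congr rfl fun j _ => add_comm _ _
  have evalPθ : ∀ x : ℝ, Pθ.eval x = c * ∏ i, (x - θ i) := by
    intro x; simp [hPθ, eval_prod]
  have hmon : (∏ k, (X + C (α k)) : ℝ[X]).Monic :=
    monic_prod_of_monic _ _ fun k _ => monic_X_add_C _
  have hmonθ : (∏ i, (X - C (θ i)) : ℝ[X]).Monic :=
    monic_prod_of_monic _ _ fun i _ => monic_X_sub_C _
  have hdegprod : (∏ k, (X + C (α k)) : ℝ[X]).natDegree = n := by
    rw [natDegree_prod_of_monic _ _ fun k _ => monic_X_add_C _]; simp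
  have hdegθ : (∏ i, (X - C (θ i)) : ℝ[X]).natDegree = n + 1 := by
    rw [natDegree_prod_of_monic _ _ fun i _ => monic_X_sub_C _]; simp
  have hlin : (C c * X + C (-(lam+q)) : ℝ[X]).degree = 1 := degree_linear hc
  have hdegP1 : P1.degree = (n + 1 : ℕ) := by
    rw [hP1, degree_mul, hlin, degree_eq_natDegree hmon.ne_zero, hdegprod]
    norm_cast
    omega
  have hdegPθ : Pθ.degree = (n + 1 : ℕ) := by
    rw [hPθ, degree_mul, degree_C hc, degree_eq_natDegree hmonθ.ne_zero, hdegθ]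
    norm_cast
    omega
  have hlcP1 : P1.leadingCoeff = c := by
    rw [hP1, leadingCoeff_mul, hmon.leadingCoeff, leadingCoeff_linear hc, mul_one]
  have hlcPθ : Pθ.leadingCoeff = c := by
    rw [hPθ, leadingCoeff_mul, hmonθ.leadingCoeff, leadingCoeff_C, mul_one]
  have hP1ne : P1 ≠ 0 := fun h => hc (by rw [← hlcP1, h, leadingCoeff_zero])
  have hsub : (P1 - Pθ).degree < ((n + 1 : ℕ) : WithBot ℕ) := by
    have := degree_sub_lt (hdegP1.trans hdegPθ.symm) hP1ne (hlcP1.trans hlcPθ.symm)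
    rwa [hdegP1] at this
  have hsubnat : (P1 - Pθ).natDegree ≤ n := by
    by_cases h : P1 - Pθ = 0
    · simp [h]
    · have := (natDegree_lt_iff_degree_lt h).mpr hsub; omega
  have hP2nat : P2.natDegree ≤ n := by
    refine (natDegree_C_mul_le _ _).trans ?_
    refine natDegree_sum_le_of_forall_le _ _ fun k _ => ?_
    refine (natDegree_C_mul_le _ _).trans ?_
    refine (natDegree_prod_le _ _).trans ?_
    calc ∑ j ∈ univ.erase k, (X + C (α j) : ℝ[X]).natDegree
        = (univ.erase k).card := by simp [natDegree_X_add_C]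
      _ ≤ (univ : Finset (Fin n)).card := Finset.card_le_card (Finset.erase_subset _ _)
      _ = n := by simp
  set G : ℝ[X] := P1 - Pθ + P2 with hG
  have hGeval : ∀ x : ℝ, G.eval x = (c * x - lam - q) * (∏ k, (α k + x))
      + lam * (∑ k, B k * ∏ j ∈ univ.erase k, (α j + x)) - c * ∏ i, (x - θ i) := by
    intro x; simp only [hG, eval_add, eval_sub, evalP1, evalP2, evalPθ]; ring
  have hGzero : G = 0 := by
    refine eq_zero_of_natDegree_lt_card_of_eval_eq_zero G hinj (fun i => ?_) ?_
    · rw [hGeval]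
      have : (∏ j, (θ i - θ j)) = 0 :=
        Finset.prod_eq_zero (Finset.mem_univ i) (sub_self _)
      rw [this, hval i]; ring
    · have : G.natDegree ≤ n := (natDegree_add_le _ _).trans (max_le hsubnat hP2nat)
      simpa using Nat.lt_succ_of_le this
  intro x
  have := congrArg (eval x) hGzero
  rw [hGeval] at this
  simp at this
  linarith

lemma lagrange_pf (n : ℕ) (α : Fin n → ℝ) (θ : Fin (n+1) → ℝ)
    (hinj : Function.Injective θ) (β : ℝ) :
    ∏ k, (α k + β)
      = ∑ i, (∏ k, (α k + θ i)) * ∏ j ∈ univ.erase i, ((θ i - θ j)⁻¹ * (β - θ j)) := by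
  classical
  set Q : ℝ[X] := ∏ k, (X + C (α k)) with hQ
  have hmon : Q.Monic := monic_prod_of_monic _ _ fun k _ => monic_X_add_C _
  have hdeg : Q.natDegree = n := by
    rw [hQ, natDegree_prod_of_monic _ _ fun k _ => monic_X_add_C _]; simp
  have evalQ : ∀ x : ℝ, Q.eval x = ∏ k, (α k + x) := by
    intro x
    simp only [hQ, eval_prod, eval_add, eval_X, eval_C]
    exact Finset.prod_congr rfl fun k _ => add_comm _ _
  have hdegQ : Q.degree < (univ : Finset (Fin (n+1))).card := by
    rw [degree_eq_natDegree hmon.ne_zero, hdeg]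
    simp
    norm_cast
    omega
  have hint := Lagrange.eq_interpolate (f := Q) (v := θ) hinj.injOn hdegQ
  have := congrArg (eval β) hint
  rw [evalQ] at this
  rw [this, Lagrange.interpolate_apply]
  rw [eval_finset_sum]
  refine Finset.sum_congr rfl fun i _ => ?_
  rw [eval_mul, eval_C, evalQ, Lagrange.basis, eval_prod]
  congr 1
  refine Finset.prod_congr rfl fun j _ => ?_
  simp [Lagrange.basisDivisor]

lemma sum_div_mul_prod (n : ℕ) (A α : Fin n → ℝ) (x : ℝ) (hx : ∀ k, α k + x ≠ 0) :
    (∑ k, A k * α k / (α k + x)) * ∏ j, (α j + x)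
      = ∑ k, (A k * α k) * ∏ j ∈ univ.erase k, (α j + x) := by
  rw [Finset.sum_mul]
  refine Finset.sum_congr rfl fun k _ => ?_
  rw [← Finset.mul_prod_erase univ _ (Finset.mem_univ k)]
  field_simp [hx k]

end Helpers

/-- Scale function of the Cramér–Lundberg process with hyper-exponential
claims: if `ψ(θ) = cθ - λ + λ ∑_k A_k α_k/(α_k+θ)` and `ψ - q` has `n+1`
distinct real roots `θ_0 = Φ(q) > 0 > θ_1 > ⋯ > θ_n`, then
`W^{(q)}(x) = ∑_i D_i e^{θ_i x}` with `D_i = 1/ψ'(θ_i)`, i.e. this function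
has Laplace transform `1/(ψ(β)-q)` for `β > Φ(q)`. -/
theorem hyperexponential_scale_function
    (n : ℕ) (c lam q : ℝ) (A α : Fin n → ℝ)
    (θ D d : Fin (n + 1) → ℝ) (ψ : ℝ → ℝ)
    (hc : 0 < c) (hlam : 0 < lam) (hq : 0 < q)
    (hA : ∀ k, 0 < A k) (hα : ∀ k, 0 < α k) (hsum : ∑ k, A k = 1)
    (hψ : ∀ x : ℝ, (∀ k, x ≠ -α k) →
      ψ x = c * x - lam + lam * ∑ k, A k * α k / (α k + x))
    (hroots : ∀ i, ψ (θ i) = q)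
    (hanti : StrictAnti θ)
    (hnotpole : ∀ i k, θ i ≠ -α k)
    (h0 : 0 < θ 0) (hneg : ∀ i : Fin (n + 1), i ≠ 0 → θ i < 0)
    (hΦmax : ∀ β > θ 0, q < ψ β)
    (hd : ∀ i, HasDerivAt ψ (d i) (θ i)) (hD : ∀ i, D i = 1 / d i) :
    ∀ β > θ 0,
      ∫ x in Set.Ioi (0:ℝ),
          Real.exp (-β * x) * (∑ i, D i * Real.exp (θ i * x))
        = 1 / (ψ β - q) := by
  classical
  intro β hβ
  have θinj : Function.Injective θ := hanti.injective
  have hθβ : ∀ i, θ i < β := fun i => lt_of_le_of_lt (hanti.antitone (Fin.zero_le i)) hβ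
  have hβpos : 0 < β := h0.trans hβ
  have hαθ : ∀ i k, α k + θ i ≠ 0 := fun i k h => hnotpole i k (by linarith)
  have hαβ : ∀ k, α k + β ≠ 0 := fun k => by have := hα k; positivity
  have hθdiff : ∀ i j : Fin (n+1), j ≠ i → θ i - θ j ≠ 0 :=
    fun i j h => sub_ne_zero.mpr fun e => h (θinj e).symm
  have hcne : c ≠ 0 := ne_of_gt hc
  -- key rational identity
  have hval : ∀ i, (c * θ i - lam - q) * (∏ k, (α k + θ i))
      + lam * ∑ k, (A k * α k) * ∏ j ∈ Finset.univ.erase k, (α j + θ i) = 0 := by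
    intro i
    have h1 := sum_div_mul_prod n A α (θ i) (hαθ i)
    have h3 : c * θ i - lam + lam * (∑ k, A k * α k / (α k + θ i)) = q := by
      rw [← hψ (θ i) (fun k => hnotpole i k), hroots i]
    rw [← h1]
    linear_combination (∏ k, (α k + θ i)) * h3
  have key := poly_id n c lam q hcne α (fun k => A k * α k) θ θinj hval
  have hψeq : ∀ x : ℝ, (∀ k, x ≠ -α k) →
      (ψ x - q) * ∏ k, (α k + x) = c * ∏ i, (x - θ i) := by
    intro x hx
    have hax : ∀ k, α k + x ≠ 0 := fun k h => hx k (by linarith)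
    have h1 := sum_div_mul_prod n A α x hax
    rw [hψ x hx, ← key x]
    linear_combination lam * h1
  -- derivative computation
  have hUopen : IsOpen {x : ℝ | ∀ k, x ≠ -α k} := by
    have : {x : ℝ | ∀ k, x ≠ -α k} = ⋂ k, ({-α k}ᶜ : Set ℝ) := by
      ext x; simp [Set.mem_iInter]
    rw [this]
    exact isOpen_iInter_of_finite fun k => isOpen_compl_singleton
  have hdi : ∀ i, d i = c * (∏ l ∈ Finset.univ.erase i, (θ i - θ l)) / (∏ k, (α k + θ i)) := by
    intro i
    have hDenne : (∏ k, (α k + θ i)) ≠ 0 := Finset.prod_ne_zero_iff.mpr fun k _ => hαθ i k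
    have hU : ψ =ᶠ[nhds (θ i)] fun x => q + (c * ∏ j, (x - θ j)) / ∏ k, (α k + x) := by
      filter_upwards [hUopen.mem_nhds (fun k => hnotpole i k)] with x hx
      have hax : ∀ k, α k + x ≠ 0 := fun k h => hx k (by linarith)
      have hDne : (∏ k, (α k + x)) ≠ 0 := Finset.prod_ne_zero_iff.mpr fun k _ => hax k
      have := (eq_div_iff hDne).mpr (hψeq x hx)
      linarith
    have hNum : HasDerivAt (fun x => ∏ j, (x - θ j))
        (∑ j, (∏ l ∈ Finset.univ.erase j, (θ i - θ l)) • (1:ℝ)) (θ i) :=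
      HasDerivAt.fun_finsetProd (fun j _ => (hasDerivAt_id _).sub_const _)
    have hsum0 : (∑ j, (∏ l ∈ Finset.univ.erase j, (θ i - θ l)) • (1:ℝ))
        = ∏ l ∈ Finset.univ.erase i, (θ i - θ l) := by
      rw [Finset.sum_eq_single i]
      · simp
      · intro j _ hj
        have : (∏ l ∈ Finset.univ.erase j, (θ i - θ l)) = 0 :=
          Finset.prod_eq_zero (Finset.mem_erase.mpr ⟨fun e => hj (e ▸ rfl), Finset.mem_univ i⟩)
            (sub_self _)
        simp [this]
      · simp
    rw [hsum0] at hNum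
    have hDen : HasDerivAt (fun x => ∏ k, (α k + x))
        (∑ k, (∏ l ∈ Finset.univ.erase k, (α l + θ i)) • (1:ℝ)) (θ i) :=
      HasDerivAt.fun_finsetProd (fun k _ => (hasDerivAt_id _).const_add _)
    set dd : ℝ := ∑ k, (∏ l ∈ Finset.univ.erase k, (α l + θ i)) • (1:ℝ) with hdd
    have hg : HasDerivAt (fun x => q + (c * ∏ j, (x - θ j)) / ∏ k, (α k + x))
        (((c * (∏ l ∈ Finset.univ.erase i, (θ i - θ l))) * (∏ k, (α k + θ i))
          - (c * ∏ j, (θ i - θ j)) * dd) / (∏ k, (α k + θ i))^2) (θ i) :=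
      ((hNum.const_mul c).div hDen hDenne).const_add q
    have hgψ := hg.congr_of_eventuallyEq hU
    have hval := (hd i).unique hgψ
    have hzero : (∏ j, (θ i - θ j)) = 0 :=
      Finset.prod_eq_zero (Finset.mem_univ i) (sub_self _)
    rw [hval, hzero]
    field_simp
    ring
  -- value of D i
  have hDi : ∀ i, D i = (∏ k, (α k + θ i)) / (c * ∏ l ∈ Finset.univ.erase i, (θ i - θ l)) := by
    intro i
    rw [hD i, hdi i, one_div_div]
  -- integral computation
  have hint : (∫ x in Set.Ioi (0:ℝ),
      Real.exp (-β * x) * (∑ i, D i * Real.exp (θ i * x)))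
      = ∑ i, D i * (1 / (β - θ i)) := by
    have heq : ∀ x : ℝ, Real.exp (-β * x) * (∑ i, D i * Real.exp (θ i * x))
        = ∑ i, D i * Real.exp (-(β - θ i) * x) := by
      intro x
      rw [Finset.mul_sum]
      refine Finset.sum_congr rfl fun i _ => ?_
      rw [← mul_assoc, mul_comm (Real.exp (-β * x)) (D i), mul_assoc, ← Real.exp_add]
      congr 1
      ring
    simp only [heq]
    rw [MeasureTheory.integral_finset_sum _ (fun i _ =>
      ((exp_neg_integrableOn_Ioi 0 (sub_pos.mpr (hθβ i))).const_mul (D i)))]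
    refine Finset.sum_congr rfl fun i _ => ?_
    rw [MeasureTheory.integral_const_mul, exp_int (sub_pos.mpr (hθβ i))]
  rw [hint]
  -- final algebraic identity
  have hβpole : ∀ k, β ≠ -α k := fun k h => by have := hα k; linarith
  have hψβ : ψ β - q = c * (∏ i, (β - θ i)) / ∏ k, (α k + β) := by
    have hDne : (∏ k, (α k + β)) ≠ 0 := Finset.prod_ne_zero_iff.mpr fun k _ => hαβ k
    exact (eq_div_iff hDne).mpr (hψeq β hβpole)
  have hprodβ : (∏ i, (β - θ i)) ≠ 0 :=
    Finset.prod_ne_zero_iff.mpr fun i _ => ne_of_gt (sub_pos.mpr (hθβ i))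
  rw [hψβ, one_div_div]
  rw [lagrange_pf n α θ θinj β, Finset.sum_div]
  refine Finset.sum_congr rfl fun i _ => ?_
  rw [hDi i]
  have hPi : (∏ l ∈ Finset.univ.erase i, (θ i - θ l)) ≠ 0 :=
    Finset.prod_ne_zero_iff.mpr fun j hj => hθdiff i j (Finset.mem_erase.mp hj).1
  have hRi : (∏ l ∈ Finset.univ.erase i, (β - θ l)) ≠ 0 :=
    Finset.prod_ne_zero_iff.mpr fun j _ => ne_of_gt (sub_pos.mpr (hθβ j))
  have hsplit : (∏ j ∈ Finset.univ.erase i, ((θ i - θ j)⁻¹ * (β - θ j)))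
      = (∏ l ∈ Finset.univ.erase i, (θ i - θ l))⁻¹ * ∏ l ∈ Finset.univ.erase i, (β - θ l) := by
    rw [Finset.prod_mul_distrib]
    congr 1
    rw [← Finset.prod_inv_distrib]
  have hfull : (∏ j, (β - θ j)) = (β - θ i) * ∏ l ∈ Finset.univ.erase i, (β - θ l) :=
    (Finset.mul_prod_erase Finset.univ _ (Finset.mem_univ i)).symm
  rw [hsplit, hfull]
  have hβθi : β - θ i ≠ 0 := ne_of_gt (sub_pos.mpr (hθβ i))
  field_simp
end

section
/- For the hyper-exponential Cramér–Lundberg model with scale functions $W^{(q)}(x) = \sum_{i=0}^n D_i e^{\theta_i x}$ and $\mathbb{W}^{(q)}(x) = \sum_{j=0}^n \tilde{D}_j e^{\tilde\theta_j x}$ ($D_i = 1/\psi'(\theta_i)$, $\tilde D_j = 1/(\psi'(\tilde\theta_j)-\delta)$ where $\theta_i$, $\tilde\theta_j$ are the roots of $\psi - q$ and $\psi - \delta\cdot - q$), one has for $x \geq b \geq 0$: $\int_b^x \mathbb{W}^{(q)}(x-z)W^{(q)\prime}(z)\,dz = -\frac{1}{\delta}W^{(q)}(x) - \sum_{j=0}^n\sum_{i=0}^n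 \frac{\tilde D_j}{\theta_i - \tilde\theta_j}D_i\theta_i e^{\theta_i b}e^{\tilde\theta_j(x-b)}$. -/
open MeasureTheory Set

set_option maxHeartbeats 1000000

section Aux

open Polynomial Finset

private theorem pf_key {n : ℕ} (c lam q δ : ℝ) (A α : Fin n → ℝ) (θt dt : Fin (n+1) → ℝ) (ψ : ℝ → ℝ)
    (hδc : δ < c)
    (hψ : ∀ x : ℝ, (∀ k, x ≠ -α k) → ψ x = c * x - lam + lam * ∑ k, A k * α k / (α k + x))
    (hroots' : ∀ j, ψ (θt j) - δ * θt j = q)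
    (hinj : Function.Injective θt)
    (hpole' : ∀ j k, θt j ≠ -α k)
    (hdt : ∀ j, HasDerivAt ψ (dt j) (θt j))
    (t : ℝ) (htp : ∀ k, t ≠ -α k) (htd : ∀ j, t ≠ θt j) :
    ∑ j, (dt j - δ)⁻¹ * (t - θt j)⁻¹ = (ψ t - δ * t - q)⁻¹ := by
  have hcδ : c - δ ≠ 0 := by linarith
  set P : ℝ[X] := ∏ k, (X + C (α k)) with hP
  set S : ℝ[X] := ∑ k, C (lam * A k * α k) * ∏ l ∈ univ.erase k, (X + C (α l)) with hS
  set F : ℝ[X] := (C (c - δ) * X - C (lam + q)) * P + S with hF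
  have evalP : ∀ x : ℝ, P.eval x = ∏ k, (x + α k) := by
    intro x; simp [hP, eval_prod]
  have hPne : ∀ x : ℝ, (∀ k, x ≠ -α k) → P.eval x ≠ 0 := by
    intro x hx
    rw [evalP]
    exact Finset.prod_ne_zero_iff.2 fun k _ h => hx k (by linarith)
  have evalF : ∀ x : ℝ, (∀ k, x ≠ -α k) → F.eval x = (ψ x - δ * x - q) * P.eval x := by
    intro x hx
    have hterm : ∀ k : Fin n, A k * α k / (α k + x) * P.eval x
        = A k * α k * ∏ l ∈ univ.erase k, (x + α l) := by
      intro k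
      have hk : α k + x ≠ 0 := fun h => hx k (by linarith)
      rw [evalP, ← Finset.mul_prod_erase univ _ (mem_univ k)]
      field_simp
      ring
    have h1 : S.eval x = lam * (∑ k, A k * α k / (α k + x)) * P.eval x := by
      simp only [hS, eval_finset_sum, eval_mul, eval_C, eval_prod, eval_add, eval_X]
      rw [mul_assoc, Finset.sum_mul, Finset.mul_sum]
      refine Finset.sum_congr rfl fun k _ => ?_
      rw [mul_assoc, hterm k]; ring
    simp only [hF, eval_add, eval_mul, eval_sub, eval_C, eval_X]
    rw [h1, hψ x hx]
    ring
  have hFeval0 : ∀ j, F.eval (θt j) = 0 := by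
    intro j
    rw [evalF _ (hpole' j), show ψ (θt j) - δ * θt j - q = 0 by linarith [hroots' j], zero_mul]
  -- factorization
  set N : ℝ[X] := Lagrange.nodal univ θt with hN
  have hNm : N.Monic := Lagrange.nodal_monic
  have hNdeg : N.natDegree = n + 1 := by
    simp [hN, Lagrange.natDegree_nodal]
  have hPm : P.Monic := monic_prod_of_monic _ _ fun k _ => monic_X_add_C _
  have hPdeg : P.natDegree = n := by
    rw [hP, natDegree_prod_of_monic _ _ fun k _ => monic_X_add_C _]
    simp [natDegree_X_add_C]
  have hXPm : (X * P).Monic := (monic_X).mul hPm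
  have hXPdeg : (X * P).natDegree = n + 1 := by
    rw [natDegree_mul (X_ne_zero) hPm.ne_zero, natDegree_X, hPdeg]; ring
  have hsubdeg : (X * P - N).natDegree ≤ n := by
    have h1 : (X * P).degree = N.degree := by
      rw [degree_eq_natDegree hXPm.ne_zero, degree_eq_natDegree hNm.ne_zero, hXPdeg, hNdeg]
    have h2 := degree_sub_lt h1 hXPm.ne_zero (by rw [hXPm.leadingCoeff, hNm.leadingCoeff])
    rw [degree_eq_natDegree hXPm.ne_zero, hXPdeg] at h2
    rcases eq_or_ne (X * P - N) 0 with h0 | h0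
    · simp [h0]
    have := (Polynomial.natDegree_lt_iff_degree_lt h0).2 (by exact_mod_cast h2)
    omega
  have hSdeg : S.natDegree ≤ n := by
    apply natDegree_sum_le_of_forall_le
    intro k _
    refine (natDegree_C_mul_le _ _).trans ?_
    have : (∏ l ∈ univ.erase k, (X + C (α l)) : ℝ[X]).natDegree ≤ n := by
      refine (natDegree_prod_le _ _).trans ?_
      calc ∑ l ∈ univ.erase k, (X + C (α l) : ℝ[X]).natDegree
          ≤ ∑ l ∈ univ.erase k, 1 := Finset.sum_le_sum fun l _ => by simp [natDegree_X_add_C]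
        _ ≤ n := by simp [Finset.card_erase_of_mem]
    exact this
  have hFN : F = C (c - δ) * N := by
    have hGdeg : (F - C (c - δ) * N).natDegree ≤ n := by
      have hrw : F - C (c - δ) * N
          = C (c - δ) * (X * P - N) + (S - C (lam + q) * P) := by
        rw [hF]; ring
      rw [hrw]
      refine (natDegree_add_le _ _).trans (max_le ((natDegree_C_mul_le _ _).trans hsubdeg) ?_)
      refine (natDegree_sub_le _ _).trans (max_le hSdeg ((natDegree_C_mul_le _ _).trans ?_))
      rw [hPdeg]
    have hGeval : ∀ j, (F - C (c - δ) * N).eval (θt j) = 0 := by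
      intro j
      simp [hFeval0 j, hN, Lagrange.eval_nodal_at_node (mem_univ j)]
    have := Polynomial.eq_zero_of_natDegree_lt_card_of_eval_eq_zero
      (F - C (c - δ) * N) hinj hGeval (by simpa using Nat.lt_succ_of_le hGdeg)
    linear_combination (norm := ring_nf) this
  -- derivative of F at the nodes, computed analytically
  have hFder : ∀ j, F.derivative.eval (θt j) = (dt j - δ) * P.eval (θt j) := by
    intro j
    have h1 : HasDerivAt (fun y => F.eval y) (F.derivative.eval (θt j)) (θt j) :=
      F.hasDerivAt (θt j)
    have h2 : HasDerivAt (fun y => (ψ y - δ * y - q) * P.eval y)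
        ((dt j - δ * 1) * P.eval (θt j)
          + (ψ (θt j) - δ * θt j - q) * P.derivative.eval (θt j)) (θt j) :=
      (((hdt j).sub ((hasDerivAt_id (θt j)).const_mul δ)).sub_const q).mul (P.hasDerivAt (θt j))
    have hev : (fun y => (ψ y - δ * y - q) * P.eval y) =ᶠ[nhds (θt j)] fun y => F.eval y :=
      ((Filter.eventually_all.2 fun k => eventually_ne_nhds (hpole' j k)).mono
        fun y hy => (evalF y hy).symm)
    have := h1.unique (h2.congr_of_eventuallyEq hev.symm)
    rw [this, show ψ (θt j) - δ * θt j - q = 0 by linarith [hroots' j]]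
    ring
  -- derivative of F at the nodes, via the factorization
  have hFder' : ∀ j, F.derivative.eval (θt j)
      = (c - δ) * ∏ l ∈ univ.erase j, (θt j - θt l) := by
    intro j
    rw [hFN, derivative_C_mul, eval_mul, eval_C, hN,
      Lagrange.eval_nodal_derivative_eval_node_eq (mem_univ j), Lagrange.eval_nodal]
  have hAne : ∀ j : Fin (n+1), (∏ l ∈ univ.erase j, (θt j - θt l)) ≠ 0 := by
    intro j
    exact Finset.prod_ne_zero_iff.2 fun l hl =>
      sub_ne_zero_of_ne fun h => (Finset.mem_erase.1 hl).1 (hinj h).symm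
  have hdtδ : ∀ j, dt j - δ
      = (c - δ) * (∏ l ∈ univ.erase j, (θt j - θt l)) / P.eval (θt j) := by
    intro j
    have hP0 := hPne (θt j) (hpole' j)
    field_simp
    rw [← hFder j, hFder' j]
  -- Lagrange interpolation of P at the nodes
  have hPdegree : P.degree < (univ : Finset (Fin (n+1))).card := by
    rw [degree_eq_natDegree hPm.ne_zero, hPdeg]
    simp only [card_univ, Fintype.card_fin]
    exact_mod_cast Nat.lt_succ_self n
  have hinterp := Lagrange.eq_interpolate (v := θt) (hinj.injOn) hPdegree
  have hPt : P.eval t = ∑ j, P.eval (θt j) *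
      ∏ l ∈ univ.erase j, ((θt j - θt l)⁻¹ * (t - θt l)) := by
    conv_lhs => rw [hinterp]
    rw [Lagrange.interpolate_apply, eval_finset_sum]
    refine Finset.sum_congr rfl fun j _ => ?_
    rw [eval_mul, eval_C, Lagrange.basis]
    congr 1
    rw [eval_prod]
    exact Finset.prod_congr rfl fun l _ => by simp [Lagrange.basisDivisor]
  -- final computation
  have htne : ∀ j, t - θt j ≠ 0 := fun j => sub_ne_zero_of_ne (htd j)
  have hprodne : (∏ l, (t - θt l)) ≠ 0 := Finset.prod_ne_zero_iff.2 fun l _ => htne l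
  have hPtne := hPne t htp
  have hFt : ψ t - δ * t - q = (c - δ) * (∏ l, (t - θt l)) / P.eval t := by
    have h1 := evalF t htp
    rw [hFN, eval_mul, eval_C, hN, Lagrange.eval_nodal] at h1
    rw [eq_div_iff hPtne]
    exact h1.symm
  rw [hFt, inv_div, eq_div_iff (mul_ne_zero hcδ hprodne), hPt, Finset.sum_mul]
  refine Finset.sum_congr rfl fun j _ => ?_
  have hPj := hPne (θt j) (hpole' j)
  have hAj := hAne j
  have htj := htne j
  rw [hdtδ j, ← Finset.mul_prod_erase univ (fun l => t - θt l) (mem_univ j),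
    Finset.prod_mul_distrib, Finset.prod_inv_distrib]
  field_simp

private theorem exp_mul_integral (a b x : ℝ) (ha : a ≠ 0) :
    ∫ z in b..x, Real.exp (a * z) = (Real.exp (a * x) - Real.exp (a * b)) / a := by
  have h : ∀ z : ℝ, HasDerivAt (fun y => Real.exp (a * y) / a) (Real.exp (a * z)) z := by
    intro z
    have h1 : HasDerivAt (fun y : ℝ => a * y) a z := by
      simpa using (hasDerivAt_id z).const_mul a
    have h2 := (Real.hasDerivAt_exp (a * z)).comp z h1
    have h3 := h2.div_const a
    simpa [Function.comp, mul_div_cancel_right₀ _ ha] using h3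
  rw [intervalIntegral.integral_eq_sub_of_hasDerivAt (fun z _ => h z)
    ((Real.continuous_exp.comp (continuous_const.mul continuous_id)).intervalIntegrable b x)]
  ring

private theorem hyperexp_conv_main
    (n : ℕ) (c lam q δ : ℝ) (A α : Fin n → ℝ)
    (θ θt D Dt d dt : Fin (n + 1) → ℝ) (ψ : ℝ → ℝ)
    (hq : 0 < q) (hδ : 0 < δ)
    (hα : ∀ k, 0 < α k) (hsum : ∑ k, A k = 1)
    (hψ : ∀ x : ℝ, (∀ k, x ≠ -α k) →
      ψ x = c * x - lam + lam * ∑ k, A k * α k / (α k + x))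
    (hroots : ∀ i, ψ (θ i) = q)
    (hdist : ∀ i j, θ i ≠ θt j)
    (hpole : ∀ i k, θ i ≠ -α k)
    (hD : ∀ i, D i = 1 / d i) (hDt : ∀ j, Dt j = 1 / (dt j - δ))
    (key : ∀ i, ∑ j, Dt j / (θ i - θt j) = -(1 / (δ * θ i))) :
    ∀ b x : ℝ, 0 ≤ b → b ≤ x →
      ∫ z in b..x,
          (∑ j, Dt j * Real.exp (θt j * (x - z)))
            * (∑ i, D i * θ i * Real.exp (θ i * z))
        = -(1 / δ) * (∑ i, D i * Real.exp (θ i * x))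
          - ∑ j, ∑ i, Dt j / (θ i - θt j) * D i * θ i
              * Real.exp (θ i * b) * Real.exp (θt j * (x - b)) := by
  intro b x hb hbx
  have hθne : ∀ i j, θ i - θt j ≠ 0 := fun i j => sub_ne_zero_of_ne (hdist i j)
  have hθ0 : ∀ i, θ i ≠ 0 := by
    intro i h0
    have hψ0 : ψ 0 = 0 := by
      rw [hψ 0 (fun k h => by have h2 : (0:ℝ) = -α k := h; have := hα k; linarith)]
      have hterm : ∀ k : Fin n, A k * α k / (α k + 0) = A k := by
        intro k
        rw [add_zero, mul_div_assoc, div_self (ne_of_gt (hα k)), mul_one]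
      rw [Finset.sum_congr rfl fun k _ => hterm k, hsum]
      ring
    have := hroots i
    rw [h0, hψ0] at this
    linarith
  have hptw : ∀ z : ℝ, (∑ j, Dt j * Real.exp (θt j * (x - z)))
      * (∑ i, D i * θ i * Real.exp (θ i * z))
      = ∑ j, ∑ i, Dt j * D i * θ i * Real.exp (θt j * x)
          * Real.exp ((θ i - θt j) * z) := by
    intro z
    rw [Finset.sum_mul_sum]
    refine Finset.sum_congr rfl fun j _ => Finset.sum_congr rfl fun i _ => ?_
    rw [show θt j * (x - z) = θt j * x + -(θt j) * z by ring, Real.exp_add,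
      show (θ i - θt j) * z = -(θt j) * z + θ i * z by ring, Real.exp_add]
    ring
  have hcont : ∀ (a C : ℝ), IntervalIntegrable (fun z => C * Real.exp (a * z))
      volume b x :=
    fun a C => ((continuous_const.mul (Real.continuous_exp.comp
      (continuous_const.mul continuous_id))).intervalIntegrable b x)
  have hint : (∫ z in b..x, (∑ j, Dt j * Real.exp (θt j * (x - z)))
        * (∑ i, D i * θ i * Real.exp (θ i * z)))
      = ∑ j, ∑ i, Dt j * D i * θ i * Real.exp (θt j * x)
          * ((Real.exp ((θ i - θt j) * x) - Real.exp ((θ i - θt j) * b))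
              / (θ i - θt j)) := by
    have h1 : (∫ z in b..x, ∑ j, ∑ i, Dt j * D i * θ i * Real.exp (θt j * x)
          * Real.exp ((θ i - θt j) * z))
        = ∑ j, ∫ z in b..x, ∑ i, Dt j * D i * θ i * Real.exp (θt j * x)
            * Real.exp ((θ i - θt j) * z) :=
      intervalIntegral.integral_finset_sum (fun j _ =>
        ((continuous_finset_sum _ (fun i (_ : i ∈ Finset.univ) =>
          (continuous_const.mul (Real.continuous_exp.comp
            (continuous_const.mul continuous_id))))).intervalIntegrable b x))
    have h2 : ∀ j : Fin (n+1), (∫ z in b..x, ∑ i, Dt j * D i * θ i * Real.exp (θt j * x)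
          * Real.exp ((θ i - θt j) * z))
        = ∑ i, ∫ z in b..x, Dt j * D i * θ i * Real.exp (θt j * x)
            * Real.exp ((θ i - θt j) * z) :=
      fun j => intervalIntegral.integral_finset_sum
        (fun i _ => hcont (θ i - θt j) (Dt j * D i * θ i * Real.exp (θt j * x)))
    rw [intervalIntegral.integral_congr (fun z _ => hptw z), h1]
    refine Finset.sum_congr rfl fun j _ => ?_
    rw [h2 j]
    refine Finset.sum_congr rfl fun i _ => ?_
    rw [intervalIntegral.integral_const_mul, exp_mul_integral _ _ _ (hθne i j)]
  rw [hint]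
  have hsplit : ∀ (j i : Fin (n + 1)),
      Dt j * D i * θ i * Real.exp (θt j * x)
        * ((Real.exp ((θ i - θt j) * x) - Real.exp ((θ i - θt j) * b)) / (θ i - θt j))
      = Dt j / (θ i - θt j) * (D i * θ i) * Real.exp (θ i * x)
        - Dt j / (θ i - θt j) * D i * θ i * Real.exp (θ i * b)
            * Real.exp (θt j * (x - b)) := by
    intro j i
    have e1 : Real.exp (θt j * x) * Real.exp ((θ i - θt j) * x) = Real.exp (θ i * x) := by
      rw [← Real.exp_add]; ring_nf
    have e2 : Real.exp (θt j * x) * Real.exp ((θ i - θt j) * b)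
        = Real.exp (θ i * b) * Real.exp (θt j * (x - b)) := by
      rw [← Real.exp_add, ← Real.exp_add]; ring_nf
    linear_combination (Dt j * D i * θ i * (θ i - θt j)⁻¹) * e1
      - (Dt j * D i * θ i * (θ i - θt j)⁻¹) * e2
  rw [Finset.sum_congr rfl fun j _ => Finset.sum_congr rfl fun i _ => hsplit j i]
  simp only [Finset.sum_sub_distrib]
  congr 1
  rw [Finset.sum_comm]
  rw [show -(1 / δ) * (∑ i, D i * Real.exp (θ i * x))
      = ∑ i, (-(1 / (δ * θ i))) * (D i * θ i * Real.exp (θ i * x)) by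
    rw [Finset.mul_sum]
    refine Finset.sum_congr rfl fun i _ => ?_
    have h1 : δ ≠ 0 := ne_of_gt hδ
    have h2 := hθ0 i
    field_simp]
  refine Finset.sum_congr rfl fun i _ => ?_
  rw [← key i, Finset.sum_mul]
  refine Finset.sum_congr rfl fun j _ => ?_
  ring

/-- Convolution computation for the hyper-exponential Cramér–Lundberg model:
with `W^{(q)}(x) = ∑_i D_i e^{θ_i x}`, `W^{(q)'}(z) = ∑_i D_i θ_i e^{θ_i z}`,
and `𝕎^{(q)}(x) = ∑_j D̃_j e^{θ̃_j x}`, for `x ≥ b ≥ 0`: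
`∫_b^x 𝕎^{(q)}(x-z) W^{(q)'}(z) dz
  = -(1/δ) W^{(q)}(x) - ∑_j ∑_i (D̃_j/(θ_i - θ̃_j)) D_i θ_i e^{θ_i b} e^{θ̃_j (x-b)}`. -/
theorem hyperexponential_dividend_convolution
    (n : ℕ) (c lam q δ : ℝ) (A α : Fin n → ℝ)
    (θ θt D Dt d dt : Fin (n + 1) → ℝ) (ψ : ℝ → ℝ)
    (hc : 0 < c) (hlam : 0 < lam) (hq : 0 < q) (hδ : 0 < δ) (hδc : δ < c)
    (hA : ∀ k, 0 < A k) (hα : ∀ k, 0 < α k) (hsum : ∑ k, A k = 1)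
    (hψ : ∀ x : ℝ, (∀ k, x ≠ -α k) →
      ψ x = c * x - lam + lam * ∑ k, A k * α k / (α k + x))
    (hroots : ∀ i, ψ (θ i) = q)
    (hroots' : ∀ j, ψ (θt j) - δ * θt j = q)
    (hanti : StrictAnti θ) (hanti' : StrictAnti θt)
    (hdist : ∀ i j, θ i ≠ θt j)
    (hpole : ∀ i k, θ i ≠ -α k) (hpole' : ∀ j k, θt j ≠ -α k)
    (hd : ∀ i, HasDerivAt ψ (d i) (θ i)) (hD : ∀ i, D i = 1 / d i)
    (hdt : ∀ j, HasDerivAt ψ (dt j) (θt j)) (hDt : ∀ j, Dt j = 1 / (dt j - δ)) :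
    ∀ b x : ℝ, 0 ≤ b → b ≤ x →
      ∫ z in b..x,
          (∑ j, Dt j * Real.exp (θt j * (x - z)))
            * (∑ i, D i * θ i * Real.exp (θ i * z))
        = -(1 / δ) * (∑ i, D i * Real.exp (θ i * x))
          - ∑ j, ∑ i, Dt j / (θ i - θt j) * D i * θ i
              * Real.exp (θ i * b) * Real.exp (θt j * (x - b)) := by
  have key : ∀ i, ∑ j, Dt j / (θ i - θt j) = -(1 / (δ * θ i)) := by
    intro i
    have h := pf_key c lam q δ A α θt dt ψ hδc hψ hroots' hanti'.injective hpole' hdt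
      (θ i) (hpole i) (hdist i)
    have hsc : ∑ j, Dt j / (θ i - θt j) = ∑ j, (dt j - δ)⁻¹ * (θ i - θt j)⁻¹ :=
      Finset.sum_congr rfl fun j _ => by rw [hDt j, one_div, div_eq_mul_inv]
    rw [hsc, h, show ψ (θ i) - δ * θ i - q = -(δ * θ i) by linarith [hroots i]]
    rw [inv_neg, one_div, mul_inv]
  exact hyperexp_conv_main n c lam q δ A α θ θt D Dt d dt ψ hq hδ hα hsum hψ hroots
    hdist hpole hD hDt key
end Aux
end
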